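/- arXiv:2012.15272 — 5 statements merged into one kernel-verified Lean document; each statement's English description precedes it below -/
import Mathlib

section
/- Let Q be an antisymmetric r×r integer matrix and Λ ⊆ ℤ^r a submonoid that is finitely generated as an ℕ-module. Then the monomial subalgebra A(Q;Λ) ⊆ T(Q), defined as the R-span of the normalized monomials {x^k : k ∈ Λ}, is a subalgebra of T(Q) and is a Noetherian domain. -/
open Finset in
theorem skewHBT {R T : Type*} [CommRing R] [Ring T] [Algebra R T] [IsDomain T]
    (A B : Subalgebra R T) (hAB : A ≤ B) (y : T) (hyB : y ∈ B) (hy : y ≠ 0)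
    (hc1 : ∀ a ∈ A, ∃ a' ∈ A, y * a = a' * y)
    (hc2 : ∀ a' ∈ A, ∃ a ∈ A, y * a = a' * y)
    (hgen : ∀ b ∈ B, ∃ (n : ℕ) (c : ℕ → T), (∀ i, c i ∈ A) ∧
      b = ∑ i ∈ Finset.range (n + 1), c i * y ^ i)
    (hA : IsNoetherianRing A) : IsNoetherianRing B := by
  -- the automorphism σ of A with y * a = σ a * y
  have hσ : ∀ a : A, ∃ a' : A, y * (a : T) = (a' : T) * y := by
    rintro ⟨a, ha⟩
    obtain ⟨a', ha', h⟩ := hc1 a ha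
    exact ⟨⟨a', ha'⟩, h⟩
  choose σf σf_spec using hσ
  have hrc : ∀ u v : T, u * y = v * y → u = v := fun u v h => mul_right_cancel₀ hy h
  have hσadd : ∀ a b : A, σf (a + b) = σf a + σf b := by
    intro a b
    have : ((σf (a + b) : T)) * y = ((σf a + σf b : A) : T) * y := by
      rw [← σf_spec]; push_cast; rw [mul_add, σf_spec, σf_spec, add_mul]
    exact Subtype.ext (hrc _ _ this)
  have hσmul : ∀ a b : A, σf (a * b) = σf a * σf b := by
    intro a b
    have : ((σf (a * b) : T)) * y = ((σf a * σf b : A) : T) * y := by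
      rw [← σf_spec]; push_cast
      rw [← mul_assoc, σf_spec, mul_assoc, σf_spec, ← mul_assoc]
    exact Subtype.ext (hrc _ _ this)
  have hσinj : Function.Injective σf := by
    intro a b h
    have : y * (a : T) = y * (b : T) := by rw [σf_spec, σf_spec, h]
    exact Subtype.ext (mul_left_cancel₀ hy this)
  have hσsurj : Function.Surjective σf := by
    rintro ⟨a', ha'⟩
    obtain ⟨a, ha, h⟩ := hc2 a' ha'
    refine ⟨⟨a, ha⟩, ?_⟩
    apply Subtype.ext
    apply hrc
    rw [← σf_spec]
    exact h
  let σ : RingAut ↥A :=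
    { Equiv.ofBijective σf ⟨hσinj, hσsurj⟩ with
      map_add' := hσadd, map_mul' := hσmul }
  have σ_apply : ∀ a : A, σ a = σf a := fun _ => rfl
  have mul_apply : ∀ (g h : RingAut ↥A) (a : A), (g * h) a = g (h a) := fun _ _ _ => rfl
  have pow_comm : ∀ (n : ℕ) (a : A), y ^ n * (a : T) = (((σ ^ n) a : A) : T) * y ^ n := by
    intro n
    induction n with
    | zero => intro a; simp
    | succ n ih =>
      intro a
      rw [pow_succ' y n, mul_assoc, ih, ← mul_assoc, σf_spec, pow_succ' σ n,
        mul_apply, σ_apply, mul_assoc, ← pow_succ' y n]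
  have embA : ∀ a : ↥A, (a : T) ∈ B := fun a => hAB a.2
  have pow_comm_sum : ∀ (m e : ℕ) (c : ℕ → T) (hc : ∀ i, c i ∈ A),
      y ^ m * ∑ i ∈ Finset.range (e + 1), c i * y ^ i =
        ∑ i ∈ Finset.range (e + 1), (((σ ^ m) ⟨c i, hc i⟩ : A) : T) * y ^ (m + i) := by
    intro m e c hc
    rw [Finset.mul_sum]
    refine Finset.sum_congr rfl fun i _ => ?_
    rw [← mul_assoc, pow_comm m ⟨c i, hc i⟩, mul_assoc, ← pow_add]
  have shift_sum : ∀ (m e : ℕ) (F : ℕ → T),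
      ∑ i ∈ Finset.range (e + 1), F i * y ^ (m + i) =
        ∑ j ∈ Finset.range (m + (e + 1)), (if m ≤ j then F (j - m) else 0) * y ^ j := by
    intro m e
    induction e with
    | zero =>
      intro F
      rw [Finset.sum_range_one, Finset.sum_range_succ]
      have h1 : ∀ j ∈ Finset.range m, (if m ≤ j then F (j - m) else 0) * y ^ j = 0 := by
        intro j hj
        rw [Finset.mem_range] at hj
        rw [if_neg (by omega : ¬ m ≤ j), zero_mul]
      rw [Finset.sum_eq_zero h1, if_pos le_rfl, Nat.sub_self, zero_add, Nat.add_zero]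
    | succ e ih =>
      intro F
      have h2 : m + (e + 1 + 1) = (m + (e + 1)) + 1 := by omega
      rw [h2, Finset.sum_range_succ,
        Finset.sum_range_succ (fun j => (if m ≤ j then F (j - m) else 0) * y ^ j) (m + (e + 1)),
        ih F, if_pos (by omega : m ≤ m + (e + 1))]
      rw [Nat.add_sub_cancel_left]
  rw [isNoetherianRing_iff_ideal_fg]
  intro I
  let L : ℕ → Ideal ↥A := fun n =>
    { carrier := {a : ↥A | ∃ b ∈ I, ∃ c : ℕ → T, (∀ i, c i ∈ A) ∧
        ((b : T) = ∑ i ∈ Finset.range (n + 1), c i * y ^ i) ∧ c n = ↑a}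
      zero_mem' := ⟨0, I.zero_mem, 0, fun i => A.zero_mem, by simp, rfl⟩
      add_mem' := by
        rintro a b ⟨p, hp, c, hc, hrep, htop⟩ ⟨p', hp', c', hc', hrep', htop'⟩
        refine ⟨p + p', I.add_mem hp hp', c + c', fun i => A.add_mem (hc i) (hc' i), ?_, ?_⟩
        · push_cast
          rw [hrep, hrep', ← Finset.sum_add_distrib]
          exact Finset.sum_congr rfl fun i _ => by rw [Pi.add_apply, add_mul]
        · simp [htop, htop']
      smul_mem' := by
        rintro r a ⟨p, hp, c, hc, hrep, htop⟩
        refine ⟨(⟨(r : T), embA r⟩ : ↥B) * p, I.mul_mem_left _ hp,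
          fun i => (r : T) * c i, fun i => A.mul_mem r.2 (hc i), ?_, ?_⟩
        · push_cast
          rw [hrep, Finset.mul_sum]
          exact Finset.sum_congr rfl fun i _ => by rw [mul_assoc]
        · show (r : T) * c n = ↑(r • a)
          rw [htop]; rfl }
  have memL : ∀ (n : ℕ) (a : ↥A), a ∈ L n ↔ ∃ b ∈ I, ∃ c : ℕ → T, (∀ i, c i ∈ A) ∧
      ((b : T) = ∑ i ∈ Finset.range (n + 1), c i * y ^ i) ∧ c n = ↑a := fun n a => Iff.rfl
  have Lstep : ∀ (n : ℕ) (a : ↥A), a ∈ L n → σ a ∈ L (n + 1) := by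
    rintro n a ⟨p, hp, c, hc, hrep, htop⟩
    have hspec : ∀ i, y * c i = ((σf ⟨c i, hc i⟩ : A) : T) * y := fun i => σf_spec ⟨c i, hc i⟩
    have hkey : (y : T) * ∑ i ∈ Finset.range (n + 1), c i * y ^ i =
        ∑ i ∈ Finset.range (n + 1), ((σf ⟨c i, hc i⟩ : A) : T) * y ^ (i + 1) := by
      rw [Finset.mul_sum]
      refine Finset.sum_congr rfl fun i _ => ?_
      rw [← mul_assoc, hspec i, mul_assoc, ← pow_succ' y i]
    refine ⟨(⟨y, hyB⟩ : ↥B) * p, I.mul_mem_left _ hp,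
      fun i => Nat.casesOn i 0 (fun j => ((σf ⟨c j, hc j⟩ : A) : T)), fun i => ?_, ?_, ?_⟩
    · cases i with
      | zero => exact A.zero_mem
      | succ j => exact (σf ⟨c j, hc j⟩).2
    · have hR := Finset.sum_range_succ'
        (fun i => (Nat.casesOn i 0 (fun j => ((σf ⟨c j, hc j⟩ : A) : T)) : T) * y ^ i) (n + 1)
      push_cast
      rw [hrep, hkey, hR]
      simp
    · have h3 : (⟨c n, hc n⟩ : ↥A) = a := Subtype.ext htop
      show ((σf ⟨c n, hc n⟩ : A) : T) = ↑(σ a)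
      rw [h3, σ_apply]
  let J : ℕ →o Ideal ↥A :=
    ⟨fun n => (L n).comap ((σ ^ n : RingAut ↥A) : ↥A →+* ↥A), by
      refine monotone_nat_of_le_succ fun n a ha => ?_
      rw [Ideal.mem_comap] at ha ⊢
      have h2 : ((σ ^ (n + 1) : RingAut ↥A) : ↥A →+* ↥A) a = σ (((σ ^ n : RingAut ↥A) : ↥A →+* ↥A) a) := by
        show ((σ ^ (n + 1)) a) = σ ((σ ^ n) a)
        rw [pow_succ' σ n, mul_apply]
      rw [h2]
      exact Lstep n _ ha⟩
  obtain ⟨n0, hn0⟩ := monotone_stabilizes_iff_noetherian.2 hA J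
  choose gens hgens using fun n => IsNoetherian.noetherian (L n)
  have hsub : ∀ (n : ℕ) (t : ↥A), t ∈ gens n → t ∈ L n := fun n t ht =>
    (hgens n) ▸ Submodule.subset_span ht
  have hwit : ∀ (n : ℕ) (t : ↥A), ∃ (b : ↥B) (cA : ℕ → ↥A), t ∈ L n → b ∈ I ∧
      ((b : T) = ∑ i ∈ Finset.range (n + 1), ((cA i : A) : T) * y ^ i) ∧ cA n = t := by
    intro n t
    by_cases h : t ∈ L n
    · obtain ⟨b, hb, c, hc, hrep, htop⟩ := h
      exact ⟨b, fun i => ⟨c i, hc i⟩, fun _ => ⟨hb, hrep, Subtype.ext htop⟩⟩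
    · exact ⟨0, 0, fun h' => absurd h' h⟩
  choose w cwA hw using hwit
  have pow_comm_sumA : ∀ (m e : ℕ) (cA : ℕ → ↥A),
      y ^ m * ∑ i ∈ Finset.range (e + 1), ((cA i : A) : T) * y ^ i =
        ∑ i ∈ Finset.range (e + 1), (((σ ^ m) (cA i) : A) : T) * y ^ (m + i) := by
    intro m e cA
    rw [Finset.mul_sum]
    refine Finset.sum_congr rfl fun i _ => ?_
    rw [← mul_assoc, pow_comm m (cA i), mul_assoc, ← pow_add]
  let Sgen : Set ↥B := ⋃ n ∈ Finset.range (n0 + 1), (w n) '' ↑(gens n)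
  have hSfin : Sgen.Finite :=
    Set.Finite.biUnion (Finset.finite_toSet _) fun n _ => Set.Finite.image _ (Finset.finite_toSet _)
  have hSgenI : Submodule.span ↥B Sgen ≤ I := by
    rw [Submodule.span_le]
    rintro b hb
    obtain ⟨n, -, t, ht, rfl⟩ : ∃ n, n ∈ Finset.range (n0 + 1) ∧ ∃ t ∈ gens n, w n t = b := by
      simpa [Sgen] using hb
    exact (hw n t (hsub n t ht)).1
  have main : ∀ d : ℕ, ∀ b : ↥B, b ∈ I → ∀ c : ℕ → T, (∀ i, c i ∈ A) →
      ((b : T) = ∑ i ∈ Finset.range (d + 1), c i * y ^ i) → b ∈ Submodule.span ↥B Sgen := by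
    intro d
    induction d using Nat.strong_induction_on with
    | _ d IH =>
    intro b hbI c hc hrep
    set e := min d n0 with he
    set m := d - e with hm
    have hed : e ≤ d := min_le_left _ _
    have hen0 : e ≤ n0 := min_le_right _ _
    have hme : m + e = d := by omega
    set a : ↥A := (⟨c d, hc d⟩ : ↥A) with ha
    have aLd : a ∈ L d := ⟨b, hbI, c, hc, hrep, rfl⟩
    have hJde : J d = J e := by
      rcases le_or_gt d n0 with h | h
      · have h1 : e = d := by omega
        rw [h1]
      · have h1 : e = n0 := by omega
        rw [h1]
        exact (hn0 d h.le).symm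
    set a₀ : ↥A := ((σ ^ m)⁻¹ : RingAut ↥A) a with ha₀def
    have hσa₀ : (σ ^ m) a₀ = a := by
      rw [ha₀def, ← mul_apply, mul_inv_cancel]
      rfl
    have ha₀L : a₀ ∈ L e := by
      have h1 : ((σ ^ d)⁻¹ : RingAut ↥A) a ∈ J d := by
        show ((σ ^ d : RingAut ↥A) : ↥A →+* ↥A) (((σ ^ d)⁻¹ : RingAut ↥A) a) ∈ L d
        have h2 : ((σ ^ d : RingAut ↥A) : ↥A →+* ↥A) (((σ ^ d)⁻¹ : RingAut ↥A) a) = a := by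
          show ((σ ^ d) (((σ ^ d)⁻¹ : RingAut ↥A) a)) = a
          rw [← mul_apply, mul_inv_cancel]
          rfl
        rw [h2]
        exact aLd
      rw [hJde] at h1
      have h3 : ((σ ^ e : RingAut ↥A) : ↥A →+* ↥A) (((σ ^ d)⁻¹ : RingAut ↥A) a) ∈ L e := h1
      have h4 : ((σ ^ e : RingAut ↥A) : ↥A →+* ↥A) (((σ ^ d)⁻¹ : RingAut ↥A) a) = a₀ := by
        show ((σ ^ e) (((σ ^ d)⁻¹ : RingAut ↥A) a)) = a₀
        rw [← mul_apply]
        congr 1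
        rw [← hme, pow_add, mul_inv_rev, mul_inv_cancel_left]
      rwa [h4] at h3
    rw [← hgens e, Submodule.mem_span_finset] at ha₀L
    obtain ⟨g, -, hg⟩ := ha₀L
    set yB : ↥B := ⟨y, hyB⟩ with hyBdef
    have hwt := fun (t : {t // t ∈ gens e}) => hw e ↑t (hsub e ↑t t.2)
    have hwtI : ∀ t : {t // t ∈ gens e}, w e ↑t ∈ I := fun t => (hwt t).1
    have hwtrep : ∀ t : {t // t ∈ gens e},
        ((w e ↑t : ↥B) : T) = ∑ i ∈ Finset.range (e + 1), ((cwA e ↑t i : A) : T) * y ^ i :=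
      fun t => (hwt t).2.1
    have hwttop : ∀ t : {t // t ∈ gens e}, cwA e ↑t e = ↑t := fun t => (hwt t).2.2
    set corr : ↥B := ∑ t ∈ (gens e).attach,
      (⟨(((σ ^ m) (g ↑t) : A) : T), embA _⟩ : ↥B) * (yB ^ m * w e ↑t) with hcorrdef
    have hcorrI : corr ∈ I := Submodule.sum_mem _ fun t _ =>
      I.mul_mem_left _ (I.mul_mem_left _ (hwtI t))
    have hwSgen : ∀ t : {t // t ∈ gens e}, w e ↑t ∈ Sgen := fun t =>
      Set.mem_iUnion₂.2 ⟨e, Finset.mem_range.2 (by omega), Set.mem_image_of_mem _ t.2⟩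
    have hcorrSpan : corr ∈ Submodule.span ↥B Sgen := Submodule.sum_mem _ fun t _ =>
      Submodule.smul_mem _ _ (Submodule.smul_mem _ _ (Submodule.subset_span (hwSgen t)))
    set q : ℕ → ↥A := fun i =>
      (σ ^ m) (∑ t ∈ (gens e).attach, g ↑t * cwA e ↑t i) with hqdef
    have hcorr_rep : (corr : T) = ∑ i ∈ Finset.range (e + 1), ((q i : A) : T) * y ^ (m + i) := by
      have h1 : (corr : T) = ∑ t ∈ (gens e).attach,
          (((σ ^ m) (g ↑t) : A) : T) * (y ^ m * ((w e ↑t : ↥B) : T)) := by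
        rw [hcorrdef]
        push_cast
        exact Finset.sum_congr rfl fun t _ => rfl
      rw [h1]
      have h2 : ∀ t : {t // t ∈ gens e}, y ^ m * ((w e ↑t : ↥B) : T)
          = ∑ i ∈ Finset.range (e + 1),
              (((σ ^ m) (cwA e ↑t i) : A) : T) * y ^ (m + i) := by
        intro t
        rw [hwtrep t]
        exact pow_comm_sumA m e _
      have h3 : ∑ t ∈ (gens e).attach, (((σ ^ m) (g ↑t) : A) : T) * (y ^ m * ((w e ↑t : ↥B) : T))
          = ∑ t ∈ (gens e).attach, ∑ i ∈ Finset.range (e + 1),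
              (((σ ^ m) (g ↑t) * (σ ^ m) (cwA e ↑t i) : A) : T) * y ^ (m + i) := by
        refine Finset.sum_congr rfl fun t _ => ?_
        rw [h2 t, Finset.mul_sum]
        refine Finset.sum_congr rfl fun i _ => ?_
        push_cast
        rw [← mul_assoc]
      rw [h3, Finset.sum_comm]
      refine Finset.sum_congr rfl fun i _ => ?_
      rw [← Finset.sum_mul]
      congr 1
      rw [hqdef]
      push_cast [map_sum, map_mul]
      rfl
    have hqtop : q e = a := by
      have h5 : (∑ t ∈ (gens e).attach, g ↑t * cwA e ↑t e) = a₀ := by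
        rw [Finset.sum_congr rfl (fun t _ => by rw [hwttop t])]
        rw [Finset.sum_attach (gens e) (fun t => g t * t)]
        exact hg
      show (σ ^ m) (∑ t ∈ (gens e).attach, g ↑t * cwA e ↑t e) = a
      rw [h5, hσa₀]
    set p' : ↥B := b - corr with hp'def
    have hp'I : p' ∈ I := Submodule.sub_mem _ hbI hcorrI
    have hbsum : b = p' + corr := by rw [hp'def, sub_add_cancel]
    have hrep' : (p' : T) = ∑ j ∈ Finset.range (d + 1),
        (c j - (if m ≤ j then ((q (j - m) : A) : T) else 0)) * y ^ j := by
      have hco : (p' : T) = (b : T) - (corr : T) := by rw [hp'def]; push_cast; ring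
      rw [hco, hrep, hcorr_rep, shift_sum m e (fun i => ((q i : A) : T)),
        (by omega : m + (e + 1) = d + 1), ← Finset.sum_sub_distrib]
      exact Finset.sum_congr rfl fun j _ => by rw [sub_mul]
    have hc'' : ∀ j, (c j - (if m ≤ j then ((q (j - m) : A) : T) else 0)) ∈ A := fun j =>
      A.sub_mem (hc j) (by
        split
        · exact (q _).2
        · exact A.zero_mem)
    have htop0 : (c d - (if m ≤ d then ((q (d - m) : A) : T) else 0)) = 0 := by
      rw [if_pos (by omega : m ≤ d), (by omega : d - m = e), hqtop]
      exact sub_eq_zero_of_eq rfl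
    have hp'span : p' ∈ Submodule.span ↥B Sgen := by
      rcases Nat.eq_zero_or_pos d with hd | hd
      · have hz : (p' : T) = 0 := by
          rw [hd] at htop0
          rw [hrep', hd, Finset.sum_range_one, htop0, zero_mul]
        have : p' = 0 := Subtype.ext (by simpa using hz)
        rw [this]
        exact Submodule.zero_mem _
      · have hd1 : d - 1 + 1 = d := by omega
        have hrep'' : (p' : T) = ∑ j ∈ Finset.range ((d - 1) + 1),
            (c j - (if m ≤ j then ((q (j - m) : A) : T) else 0)) * y ^ j := by
          rw [hrep', (by omega : d + 1 = (d - 1 + 1) + 1), Finset.sum_range_succ, hd1, htop0,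
            zero_mul, add_zero]
        exact IH (d - 1) (by omega) p' hp'I _ hc'' hrep''
    rw [hbsum]
    exact Submodule.add_mem _ hp'span hcorrSpan
  refine ⟨hSfin.toFinset, ?_⟩
  rw [Set.Finite.coe_toFinset]
  refine le_antisymm hSgenI fun b hb => ?_
  obtain ⟨d, c, hc, hrep⟩ := hgen (b : T) b.2
  exact main d b hb c hc hrep


/-- The monomial subalgebra `A(Q;Λ)` of a quantum torus, for a submonoid `Λ ⊆ ℤ^r` which is
finitely generated as an ℕ-module, is a subalgebra and a Noetherian domain.
The quantum torus is modeled by its free basis of normalized monomials `x k` with the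
normalized product rule. -/
theorem monomial_subalgebra_noetherian_domain
    (R T : Type*) [CommRing R] [IsDomain R] [IsNoetherianRing R]
    [Ring T] [Algebra R T] [IsDomain T]
    (s : Rˣ) (r : ℕ) (Q : Fin r → Fin r → ℤ) (hQ : ∀ i j, Q j i = -Q i j)
    (x : (Fin r → ℤ) → T) (hx0 : x 0 = 1)
    (hmul : ∀ k k' : Fin r → ℤ, x k * x k' =
      ((s ^ (∑ i, ∑ j, Q i j * k i * k' j) : Rˣ) : R) • x (k + k'))
    (hindep : LinearIndependent R x)
    (Λ : AddSubmonoid (Fin r → ℤ)) (hΛ : Λ.FG) :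
    ∃ S : Subalgebra R T,
      Subalgebra.toSubmodule S = Submodule.span R (x '' (Λ : Set (Fin r → ℤ))) ∧
      IsNoetherianRing S ∧ IsDomain S := by
  classical
  obtain ⟨G, hG⟩ := hΛ
  have hsub1 : ∀ Λ' : AddSubmonoid (Fin r → ℤ),
      (1 : T) ∈ Submodule.span R (x '' (Λ' : Set (Fin r → ℤ))) := fun Λ' => by
    rw [← hx0]; exact Submodule.subset_span ⟨0, Λ'.zero_mem, rfl⟩
  have hsubmul : ∀ Λ' : AddSubmonoid (Fin r → ℤ), ∀ a b : T,
      a ∈ Submodule.span R (x '' (Λ' : Set (Fin r → ℤ))) →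
      b ∈ Submodule.span R (x '' (Λ' : Set (Fin r → ℤ))) →
      a * b ∈ Submodule.span R (x '' (Λ' : Set (Fin r → ℤ))) := by
    intro Λ'
    have hMM : Submodule.span R (x '' (Λ' : Set (Fin r → ℤ))) *
        Submodule.span R (x '' (Λ' : Set (Fin r → ℤ))) ≤
        Submodule.span R (x '' (Λ' : Set (Fin r → ℤ))) := by
      rw [Submodule.span_mul_span]
      refine Submodule.span_le.2 ?_
      rintro u ⟨a, ⟨k, hk, rfl⟩, b, ⟨k', hk', rfl⟩, rfl⟩
      show x k * x k' ∈ _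
      rw [hmul]
      exact Submodule.smul_mem _ _ (Submodule.subset_span ⟨k + k', Λ'.add_mem hk hk', rfl⟩)
    exact fun a b ha hb => hMM (Submodule.mul_mem_mul ha hb)
  let SA : AddSubmonoid (Fin r → ℤ) → Subalgebra R T := fun Λ' =>
    (Submodule.span R (x '' (Λ' : Set (Fin r → ℤ)))).toSubalgebra (hsub1 Λ') (hsubmul Λ')
  have smul_unit_cancel : ∀ (v : Rˣ) (t : T), ((v⁻¹ : Rˣ) : R) • (((v : Rˣ) : R) • t) = t :=
    fun v t => by rw [smul_smul, ← Units.val_mul, inv_mul_cancel, Units.val_one, one_smul]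
  have hpow : ∀ (g : Fin r → ℤ) (n : ℕ), ∃ u : Rˣ, x g ^ n = ((u : Rˣ) : R) • x (n • g) := by
    intro g n
    induction n with
    | zero => exact ⟨1, by simp [hx0]⟩
    | succ n ih =>
      obtain ⟨u, hu⟩ := ih
      refine ⟨u * s ^ (∑ i, ∑ j, Q i j * (n • g) i * g j), ?_⟩
      rw [pow_succ, hu, smul_mul_assoc, hmul, smul_smul, ← Units.val_mul, succ_nsmul]
  have key : ∀ l : List (Fin r → ℤ),
      IsNoetherianRing ↥(SA (AddSubmonoid.closure {z | z ∈ l})) := by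
    intro l
    induction l with
    | nil =>
      set Λb := AddSubmonoid.closure {z | z ∈ ([] : List (Fin r → ℤ))} with hΛb
      have hbot : Λb = ⊥ := by
        refine le_antisymm ((AddSubmonoid.closure_le).2 ?_) bot_le
        rintro z hz
        simp at hz
      have him : x '' (Λb : Set (Fin r → ℤ)) = {1} := by
        rw [hbot]
        ext z
        simp [hx0, eq_comm]
      refine isNoetherianRing_of_surjective R _ (algebraMap R ↥(SA Λb)) ?_
      intro b
      have hb : (b : T) ∈ Submodule.span R (x '' (Λb : Set (Fin r → ℤ))) := b.2
      rw [him, Submodule.mem_span_singleton] at hb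
      obtain ⟨c, hc⟩ := hb
      refine ⟨c, Subtype.ext ?_⟩
      rw [show ((algebraMap R ↥(SA Λb) c : ↥(SA Λb)) : T) = algebraMap R T c from rfl,
        Algebra.algebraMap_eq_smul_one]
      exact hc
    | cons g l ih =>
      set Λ₀ := AddSubmonoid.closure {z | z ∈ l} with hΛ₀
      set Λ₁ := AddSubmonoid.closure {z | z ∈ g :: l} with hΛ₁
      have hΛ₁eq : Λ₁ = Λ₀ ⊔ AddSubmonoid.closure {g} := by
        rw [hΛ₁, show ({z | z ∈ g :: l} : Set (Fin r → ℤ)) = {g} ∪ {z | z ∈ l} by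
          ext z; simp [List.mem_cons], AddSubmonoid.closure_union, sup_comm]
      have hle : Λ₀ ≤ Λ₁ := AddSubmonoid.closure_mono (by
        intro t ht
        simp only [Set.mem_setOf_eq, List.mem_cons] at *
        exact Or.inr ht)
      have hAB : SA Λ₀ ≤ SA Λ₁ := fun z hz =>
        Submodule.span_mono (Set.image_mono (fun t ht => hle ht)) hz
      have hyB : x g ∈ SA Λ₁ :=
        Submodule.subset_span ⟨g, AddSubmonoid.subset_closure (by simp), rfl⟩
      have hyne : x g ≠ 0 := hindep.ne_zero g
      have hcomm : ∀ a ∈ SA Λ₀, ∃ a' ∈ SA Λ₀, x g * a = a' * x g := by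
        intro a ha
        have ha' : a ∈ Submodule.span R (x '' (Λ₀ : Set (Fin r → ℤ))) := ha
        clear ha
        induction ha' using Submodule.span_induction with
        | mem z hz =>
          obtain ⟨k, hk, rfl⟩ := hz
          refine ⟨((s ^ (∑ i, ∑ j, Q i j * g i * k j) *
              (s ^ (∑ i, ∑ j, Q i j * k i * g j))⁻¹ : Rˣ) : R) • x k,
            Submodule.smul_mem _ _ (Submodule.subset_span ⟨k, hk, rfl⟩), ?_⟩
          rw [hmul, smul_mul_assoc, hmul, smul_smul, ← Units.val_mul, inv_mul_cancel_right,
            add_comm g k]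
        | zero => exact ⟨0, Submodule.zero_mem _, by simp⟩
        | add a b ha hb iha ihb =>
          obtain ⟨a', ha', hea⟩ := iha
          obtain ⟨b', hb', heb⟩ := ihb
          exact ⟨a' + b', Submodule.add_mem _ ha' hb', by rw [mul_add, hea, heb, add_mul]⟩
        | smul r a ha iha =>
          obtain ⟨a', ha', hea⟩ := iha
          exact ⟨r • a', Submodule.smul_mem _ _ ha', by
            rw [mul_smul_comm, hea, smul_mul_assoc]⟩
      have hcomm' : ∀ a' ∈ SA Λ₀, ∃ a ∈ SA Λ₀, x g * a = a' * x g := by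
        intro a ha
        have ha' : a ∈ Submodule.span R (x '' (Λ₀ : Set (Fin r → ℤ))) := ha
        clear ha
        induction ha' using Submodule.span_induction with
        | mem z hz =>
          obtain ⟨k, hk, rfl⟩ := hz
          refine ⟨((s ^ (∑ i, ∑ j, Q i j * k i * g j) *
              (s ^ (∑ i, ∑ j, Q i j * g i * k j))⁻¹ : Rˣ) : R) • x k,
            Submodule.smul_mem _ _ (Submodule.subset_span ⟨k, hk, rfl⟩), ?_⟩
          rw [mul_smul_comm, hmul, hmul, smul_smul, ← Units.val_mul, inv_mul_cancel_right,
            add_comm g k]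
        | zero => exact ⟨0, Submodule.zero_mem _, by simp⟩
        | add a b ha hb iha ihb =>
          obtain ⟨a', ha', hea⟩ := iha
          obtain ⟨b', hb', heb⟩ := ihb
          exact ⟨a' + b', Submodule.add_mem _ ha' hb', by rw [mul_add, add_mul, hea, heb]⟩
        | smul r a ha iha =>
          obtain ⟨a', ha', hea⟩ := iha
          exact ⟨r • a', Submodule.smul_mem _ _ ha', by
            rw [mul_smul_comm, hea, smul_mul_assoc]⟩
      have hext : ∀ (n : ℕ) (b : T), (∃ c : ℕ → T, (∀ i, c i ∈ SA Λ₀) ∧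
          b = ∑ i ∈ Finset.range (n + 1), c i * x g ^ i) →
          ∀ nn, n ≤ nn → ∃ c : ℕ → T, (∀ i, c i ∈ SA Λ₀) ∧
          b = ∑ i ∈ Finset.range (nn + 1), c i * x g ^ i := by
        intro n b hb nn hnn
        induction nn, hnn using Nat.le_induction with
        | base => exact hb
        | succ nn hnn ihn =>
          obtain ⟨c, hc, hrep⟩ := ihn
          refine ⟨Function.update c (nn + 1) 0, fun i => ?_, ?_⟩
          · rcases eq_or_ne i (nn + 1) with h | h
            · rw [h, Function.update_self]; exact zero_mem _
            · rw [Function.update_of_ne h]; exact hc i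
          · rw [Finset.sum_range_succ, Function.update_self, zero_mul, add_zero, hrep]
            refine Finset.sum_congr rfl fun i hi => ?_
            rw [Finset.mem_range] at hi
            rw [Function.update_of_ne (by omega)]
      have hgen : ∀ b ∈ SA Λ₁, ∃ (n : ℕ) (c : ℕ → T), (∀ i, c i ∈ SA Λ₀) ∧
          b = ∑ i ∈ Finset.range (n + 1), c i * x g ^ i := by
        intro b hb
        have hb' : b ∈ Submodule.span R (x '' (Λ₁ : Set (Fin r → ℤ))) := hb
        clear hb
        induction hb' using Submodule.span_induction with
        | mem z hz =>
          obtain ⟨k, hk, rfl⟩ := hz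
          rw [hΛ₁eq] at hk
          obtain ⟨k', hk', z, hz', rfl⟩ := AddSubmonoid.mem_sup.1 hk
          obtain ⟨n, rfl⟩ := AddSubmonoid.mem_closure_singleton.1 hz'
          obtain ⟨u, hu⟩ := hpow g n
          have hstep : x k' * x g ^ n =
              ((u * s ^ (∑ i, ∑ j, Q i j * k' i * (n • g) j) : Rˣ) : R) • x (k' + n • g) := by
            rw [hu, mul_smul_comm, hmul, smul_smul, ← Units.val_mul]
          refine ⟨n, Function.update (0 : ℕ → T) n
              ((((u * s ^ (∑ i, ∑ j, Q i j * k' i * (n • g) j))⁻¹ : Rˣ) : R) • x k'),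
              fun i => ?_, ?_⟩
          · rcases eq_or_ne i n with h | h
            · rw [h, Function.update_self]
              exact Submodule.smul_mem _ _ (Submodule.subset_span ⟨k', hk', rfl⟩)
            · rw [Function.update_of_ne h]; exact zero_mem _
          · rw [Finset.sum_eq_single n
              (fun b _ hb => by rw [Function.update_of_ne hb, Pi.zero_apply, zero_mul])
              (fun hn => absurd (Finset.mem_range.2 (by omega)) hn), Function.update_self,
              smul_mul_assoc, hstep, smul_unit_cancel]
        | zero => exact ⟨0, 0, fun i => zero_mem _, by simp⟩
        | add a b ha hb iha ihb =>
          obtain ⟨n1, c1, hc1, h1⟩ := iha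
          obtain ⟨n2, c2, hc2, h2⟩ := ihb
          obtain ⟨c1', hc1', h1'⟩ := hext n1 _ ⟨c1, hc1, h1⟩ (max n1 n2) (le_max_left _ _)
          obtain ⟨c2', hc2', h2'⟩ := hext n2 _ ⟨c2, hc2, h2⟩ (max n1 n2) (le_max_right _ _)
          refine ⟨max n1 n2, c1' + c2', fun i => add_mem (hc1' i) (hc2' i), ?_⟩
          rw [h1', h2', ← Finset.sum_add_distrib]
          exact Finset.sum_congr rfl fun i _ => by rw [Pi.add_apply, add_mul]
        | smul r a ha iha =>
          obtain ⟨n1, c1, hc1, h1⟩ := iha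
          refine ⟨n1, fun i => r • c1 i, fun i => Subalgebra.smul_mem _ (hc1 i) r, ?_⟩
          rw [h1, Finset.smul_sum]
          exact Finset.sum_congr rfl fun i _ => (smul_mul_assoc r (c1 i) _).symm
      exact skewHBT (SA Λ₀) (SA Λ₁) hAB (x g) hyB hyne hcomm hcomm' hgen ih
  have hset : ({z | z ∈ G.toList} : Set (Fin r → ℤ)) = (G : Set (Fin r → ℤ)) := by
    ext z; simp
  have hclos : AddSubmonoid.closure {z | z ∈ G.toList} = Λ := by rw [hset]; exact hG
  refine ⟨SA Λ, rfl, hclos ▸ key G.toList, inferInstance⟩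
end

section
/- Let Q be an antisymmetric r×r integer matrix over the ground ring R. The center Z(T(Q)) of the quantum torus T(Q) equals the R-span of the normalized monomials x^k with k in the subgroup Λ(Q,q) = {k ∈ ℤ^r : q^{⟨k,k'⟩_Q} = 1 for all k' ∈ ℤ^r}. -/
/-- The center of the quantum torus `T(Q)` is the `R`-span of the normalized monomials `x^k`
with `k` in `Λ(Q,q) = {k | q^{⟨k,k'⟩_Q} = 1 for all k'}`, where `q = s^2`. -/
theorem quantum_torus_center
    (R T : Type*) [CommRing R] [IsDomain R] [Ring T] [Algebra R T]
    (s : Rˣ) (r : ℕ) (Q : Fin r → Fin r → ℤ) (hQ : ∀ i j, Q j i = -Q i j)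
    (x : (Fin r → ℤ) → T) (hx0 : x 0 = 1)
    (hmul : ∀ k k' : Fin r → ℤ, x k * x k' =
      ((s ^ (∑ i, ∑ j, Q i j * k i * k' j) : Rˣ) : R) • x (k + k'))
    (hindep : LinearIndependent R x)
    (hspan : Submodule.span R (Set.range x) = ⊤) :
    {t : T | ∀ a : T, t * a = a * t} =
      (Submodule.span R (x '' {k : Fin r → ℤ |
        ∀ k' : Fin r → ℤ,
          ((s ^ (2 * ∑ i, ∑ j, Q i j * k i * k' j) : Rˣ) : R) = 1}) : Set T) := by
  classical
  -- antisymmetry of the form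
  have hanti : ∀ k k' : Fin r → ℤ,
      (∑ i, ∑ j, Q i j * k' i * k j) = -(∑ i, ∑ j, Q i j * k i * k' j) := by
    intro k k'
    rw [Finset.sum_comm]
    have : ∀ j i : Fin r, Q i j * k' i * k j = -(Q j i * k j * k' i) := by
      intro j i; rw [hQ j i]; ring
    simp_rw [this, Finset.sum_neg_distrib]
  -- reversed multiplication rule
  have hmul' : ∀ k k' : Fin r → ℤ, x k' * x k =
      ((s ^ (-(∑ i, ∑ j, Q i j * k i * k' j)) : Rˣ) : R) • x (k + k') := by
    intro k k'
    rw [hmul, hanti, add_comm]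
  -- from (s^(2E) : R) = 1 deduce (s^E : R) = (s^(-E) : R)
  have hhalf : ∀ E : ℤ, ((s ^ (2 * E) : Rˣ) : R) = 1 →
      ((s ^ E : Rˣ) : R) = ((s ^ (-E) : Rˣ) : R) := by
    intro E hE
    have h1 : (s ^ (2 * E) : Rˣ) = 1 := Units.ext (by simpa using hE)
    have h2 : s ^ E * s ^ E = 1 := by
      rw [← zpow_add]; rw [two_mul] at h1; exact h1
    have : s ^ E = (s ^ E)⁻¹ := eq_inv_of_mul_eq_one_right h2
    rw [← zpow_neg] at this
    exact congrArg Units.val this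
  -- and conversely
  have hhalf' : ∀ E : ℤ, ((s ^ E : Rˣ) : R) = ((s ^ (-E) : Rˣ) : R) →
      ((s ^ (2 * E) : Rˣ) : R) = 1 := by
    intro E hE
    have h1 : (s ^ E : Rˣ) = s ^ (-E) := Units.ext hE
    have h2 : (s ^ (2 * E) : Rˣ) = 1 := by
      calc (s ^ (2 * E) : Rˣ) = s ^ E * s ^ E := by rw [two_mul, zpow_add]
        _ = s ^ E * s ^ (-E) := congrArg (s ^ E * ·) h1
        _ = 1 := by rw [← zpow_add, add_neg_cancel, zpow_zero]
    exact congrArg Units.val h2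
  ext t
  simp only [Set.mem_setOf_eq, SetLike.mem_coe]
  constructor
  · -- center ⊆ span
    intro ht
    obtain ⟨c, hc⟩ := Finsupp.mem_span_range_iff_exists_finsupp.mp
      (hspan ▸ Submodule.mem_top : t ∈ Submodule.span R (Set.range x))
    have hrepr : t = ∑ k ∈ c.support, c k • x k := by
      rw [← hc]; rfl
    suffices hsupp : ∀ k ∈ c.support, ∀ k' : Fin r → ℤ,
        ((s ^ (2 * ∑ i, ∑ j, Q i j * k i * k' j) : Rˣ) : R) = 1 by
      rw [hrepr]
      refine Submodule.sum_mem _ fun k hk => Submodule.smul_mem _ _ ?_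
      exact Submodule.subset_span ⟨k, fun k' => hsupp k hk k', rfl⟩
    intro k0 hk0 k'
    -- compare t * x k' and x k' * t
    have heq : ∑ k ∈ c.support,
          (c k * ((s ^ (∑ i, ∑ j, Q i j * k i * k' j) : Rˣ) : R)) • x (k + k')
        = ∑ k ∈ c.support,
          (c k * ((s ^ (-(∑ i, ∑ j, Q i j * k i * k' j)) : Rˣ) : R)) • x (k + k') := by
      have h1 : t * x k' = ∑ k ∈ c.support,
          (c k * ((s ^ (∑ i, ∑ j, Q i j * k i * k' j) : Rˣ) : R)) • x (k + k') := by
        rw [hrepr, Finset.sum_mul]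
        simp_rw [smul_mul_assoc, hmul, smul_smul]
      have h2 : x k' * t = ∑ k ∈ c.support,
          (c k * ((s ^ (-(∑ i, ∑ j, Q i j * k i * k' j)) : Rˣ) : R)) • x (k + k') := by
        rw [hrepr, Finset.mul_sum]
        simp_rw [mul_smul_comm, hmul', smul_smul]
      rw [← h1, ← h2, ht]
    have hzero : ∑ k ∈ c.support,
        (c k * ((s ^ (∑ i, ∑ j, Q i j * k i * k' j) : Rˣ) : R)
          - c k * ((s ^ (-(∑ i, ∑ j, Q i j * k i * k' j)) : Rˣ) : R)) • x (k + k') = 0 := by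
      simp_rw [sub_smul, Finset.sum_sub_distrib, heq, sub_self]
    -- reindex
    set g : (Fin r → ℤ) → R := fun m =>
      c (m - k') * ((s ^ (∑ i, ∑ j, Q i j * (m - k') i * k' j) : Rˣ) : R)
        - c (m - k') * ((s ^ (-(∑ i, ∑ j, Q i j * (m - k') i * k' j)) : Rˣ) : R) with hg
    have hzero' : ∑ m ∈ c.support.image (· + k'), g m • x m = 0 := by
      rw [Finset.sum_image (fun a _ b _ h => by simpa using h)]
      rw [← hzero]
      refine Finset.sum_congr rfl fun k _ => ?_
      simp [hg, add_sub_cancel_right]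
    have := linearIndependent_iff'.mp hindep _ g hzero' (k0 + k')
      (Finset.mem_image_of_mem _ hk0)
    rw [hg] at this
    simp only [add_sub_cancel_right] at this
    have hck : c k0 ≠ 0 := Finsupp.mem_support_iff.mp hk0
    have := sub_eq_zero.mp this
    have heqc : ((s ^ (∑ i, ∑ j, Q i j * k0 i * k' j) : Rˣ) : R)
        = ((s ^ (-(∑ i, ∑ j, Q i j * k0 i * k' j)) : Rˣ) : R) :=
      mul_left_cancel₀ hck this
    exact hhalf' _ heqc
  · -- span ⊆ center
    intro ht
    have hgen : ∀ k : Fin r → ℤ, (∀ k' : Fin r → ℤ,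
        ((s ^ (2 * ∑ i, ∑ j, Q i j * k i * k' j) : Rˣ) : R) = 1) →
        ∀ a : T, x k * a = a * x k := by
      intro k hk a
      have ha : a ∈ Submodule.span R (Set.range x) := hspan ▸ Submodule.mem_top
      induction ha using Submodule.span_induction with
      | mem a hmem =>
        obtain ⟨k', rfl⟩ := hmem
        rw [hmul, hmul', hhalf _ (hk k')]
      | zero => simp
      | add a b _ _ iha ihb => rw [mul_add, add_mul, iha, ihb]
      | smul r a _ ih => rw [mul_smul_comm, smul_mul_assoc, ih]
    intro a
    let C : Submodule R T :=
      { carrier := {u : T | ∀ b : T, u * b = b * u}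
        add_mem' := fun {u v} hu hv b => by rw [add_mul, mul_add, hu b, hv b]
        zero_mem' := fun b => by rw [zero_mul, mul_zero]
        smul_mem' := fun r u hu b => by rw [smul_mul_assoc, hu b, mul_smul_comm] }
    have hle : Submodule.span R (x '' {k : Fin r → ℤ |
        ∀ k' : Fin r → ℤ,
          ((s ^ (2 * ∑ i, ∑ j, Q i j * k i * k' j) : Rˣ) : R) = 1}) ≤ C := by
      refine Submodule.span_le.mpr ?_
      rintro _ ⟨k, hk, rfl⟩
      exact fun b => hgen k hk b
    exact hle ht a
end

section
/- Let Q, Q' be antisymmetric integer matrices of sizes r×r and r'×r' respectively, and let H be an r×r' integer matrix with H Q' Hᵀ = Q. Then the R-linear map T(Q) → T(Q') defined on the basis of normalized monomials by x^k ↦ x^{kH} is an R-algebra homomorphism. -/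
/-- If `H Q' Hᵀ = Q`, then the `R`-linear map between the quantum tori `T(Q) → T(Q')`
sending the normalized monomial `x^k` to `x^{kH}` is an `R`-algebra homomorphism. -/
theorem multiplicatively_linear_homomorphism
    (R T T' : Type*) [CommRing R] [Ring T] [Algebra R T] [Ring T'] [Algebra R T']
    (s : Rˣ) (r r' : ℕ)
    (Q : Fin r → Fin r → ℤ) (Q' : Fin r' → Fin r' → ℤ)
    (hQ : ∀ i j, Q j i = -Q i j) (hQ' : ∀ i j, Q' j i = -Q' i j)
    (H : Fin r → Fin r' → ℤ)
    (hH : ∀ i j, (∑ a, ∑ b, H i a * Q' a b * H j b) = Q i j)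
    (x : (Fin r → ℤ) → T) (hx0 : x 0 = 1)
    (hxmul : ∀ k k' : Fin r → ℤ, x k * x k' =
      ((s ^ (∑ i, ∑ j, Q i j * k i * k' j) : Rˣ) : R) • x (k + k'))
    (hxspan : Submodule.span R (Set.range x) = ⊤)
    (y : (Fin r' → ℤ) → T') (hy0 : y 0 = 1)
    (hymul : ∀ m m' : Fin r' → ℤ, y m * y m' =
      ((s ^ (∑ i, ∑ j, Q' i j * m i * m' j) : Rˣ) : R) • y (m + m'))
    (f : T →ₗ[R] T')
    (hf : ∀ k : Fin r → ℤ, f (x k) = y (fun j => ∑ i, k i * H i j)) :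
    f 1 = 1 ∧ ∀ a b : T, f (a * b) = f a * f b := by
  constructor
  · have hzero : (fun j => ∑ i, (0 : Fin r → ℤ) i * H i j) = (0 : Fin r' → ℤ) := by
      funext j; simp
    calc f 1 = f (x 0) := by rw [hx0]
      _ = y (fun j => ∑ i, (0 : Fin r → ℤ) i * H i j) := hf 0
      _ = y 0 := by rw [hzero]
      _ = 1 := hy0
  · -- exponent identity
    have key2 : ∀ k k' : Fin r → ℤ,
        (∑ i, ∑ j, Q' i j * (∑ a, k a * H a i) * (∑ b, k' b * H b j)) =
        ∑ a, ∑ b, Q a b * k a * k' b := by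
      intro k k'
      have step1 : ∀ (i j : Fin r'),
          Q' i j * (∑ a, k a * H a i) * (∑ b, k' b * H b j)
          = ∑ a, ∑ b, Q' i j * (k a * H a i) * (k' b * H b j) := by
        intro i j
        rw [mul_assoc, Finset.sum_mul_sum, Finset.mul_sum]
        refine Finset.sum_congr rfl fun a _ => ?_
        rw [Finset.mul_sum]
        exact Finset.sum_congr rfl fun b _ => by ring
      calc (∑ i, ∑ j, Q' i j * (∑ a, k a * H a i) * (∑ b, k' b * H b j))
          = ∑ i, ∑ j, ∑ a, ∑ b, Q' i j * (k a * H a i) * (k' b * H b j) := by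
            simp only [step1]
        _ = ∑ i, ∑ a, ∑ j, ∑ b, Q' i j * (k a * H a i) * (k' b * H b j) :=
            Finset.sum_congr rfl fun i _ => Finset.sum_comm
        _ = ∑ a, ∑ i, ∑ j, ∑ b, Q' i j * (k a * H a i) * (k' b * H b j) :=
            Finset.sum_comm
        _ = ∑ a, ∑ i, ∑ b, ∑ j, Q' i j * (k a * H a i) * (k' b * H b j) :=
            Finset.sum_congr rfl fun a _ => Finset.sum_congr rfl fun i _ =>
              Finset.sum_comm
        _ = ∑ a, ∑ b, ∑ i, ∑ j, Q' i j * (k a * H a i) * (k' b * H b j) :=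
            Finset.sum_congr rfl fun a _ => Finset.sum_comm
        _ = ∑ a, ∑ b, Q a b * k a * k' b := by
            refine Finset.sum_congr rfl fun a _ => Finset.sum_congr rfl fun b _ => ?_
            have : ∀ (i j : Fin r'), Q' i j * (k a * H a i) * (k' b * H b j)
                = H a i * Q' i j * H b j * (k a * k' b) := fun i j => by ring
            simp only [this, ← Finset.sum_mul]
            rw [hH]
            ring
    have key : ∀ k k' : Fin r → ℤ, f (x k * x k') = f (x k) * f (x k') := by
      intro k k'
      have harg : (fun j => ∑ i, (k + k') i * H i j)
          = (fun j => ∑ i, k i * H i j) + fun j => ∑ i, k' i * H i j := by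
        funext j
        simp [add_mul, Finset.sum_add_distrib]
      rw [hxmul, map_smul, hf, hf, hf, hymul, key2]
      congr 1
      exact congrArg y harg
    have h1 : ∀ k : Fin r → ℤ, ∀ b : T, f (x k * b) = f (x k) * f b := by
      intro k b
      have hb : b ∈ Submodule.span R (Set.range x) := by rw [hxspan]; trivial
      induction hb using Submodule.span_induction with
      | mem b hb => obtain ⟨k', rfl⟩ := hb; exact key k k'
      | zero => simp
      | add b c hb hc ihb ihc => simp [mul_add, ihb, ihc]
      | smul c b hb ih => simp [mul_smul_comm, ih]
    intro a b
    have ha : a ∈ Submodule.span R (Set.range x) := by rw [hxspan]; trivial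
    induction ha using Submodule.span_induction with
    | mem a hamem => obtain ⟨k, rfl⟩ := hamem; exact h1 k b
    | zero => simp
    | add a c hamem hc iha ihc => simp [add_mul, iha, ihc]
    | smul c a hamem ih => simp [smul_mul_assoc, ih]
end

section
/- Under the hypotheses of the sandwich embedding (A a domain with T_+(Q) ⊆ A ⊆ T(Q)), the set S = {q^{n/2} x^k : n ∈ ℤ, k ∈ ℕ^r} is a (left and right) Ore multiplicative set in A. -/
def qform (r : ℕ) (Q : Fin r → Fin r → ℤ) (k k' : Fin r → ℤ) : ℤ :=
  ∑ i, ∑ j, Q i j * k i * k' j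


/-- Under the sandwich hypotheses (`A` a domain containing the quantum space, with every
element absorbed into the quantum space by a monomial), the set
`S = {q^{n/2} x^k : n ∈ ℤ, k ∈ ℕ^r}` is a multiplicative set satisfying the left and right
Ore conditions in `A`. -/
theorem monomials_form_ore_set
    (R A : Type*) [CommRing R] [IsDomain R] [Ring A] [Algebra R A] [IsDomain A]
    (s : Rˣ) (r : ℕ) (Q : Fin r → Fin r → ℤ) (hQ : ∀ i j, Q j i = -Q i j)
    (y : (Fin r → ℤ) → A) (hy0 : y 0 = 1)
    (hymul : ∀ k k' : Fin r → ℤ, (∀ i, 0 ≤ k i) → (∀ i, 0 ≤ k' i) →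
      y k * y k' = ((s ^ (∑ i, ∑ j, Q i j * k i * k' j) : Rˣ) : R) • y (k + k'))
    (habsorb : ∀ a : A, ∃ k : Fin r → ℤ, (∀ i, 0 ≤ k i) ∧
      y k * a ∈ Submodule.span R (y '' {k : Fin r → ℤ | ∀ i, 0 ≤ k i}))
    (Sset : Set A)
    (hSset : Sset = {a : A | ∃ (m : ℤ) (k : Fin r → ℤ),
      (∀ i, 0 ≤ k i) ∧ a = ((s ^ m : Rˣ) : R) • y k}) :
    (1 : A) ∈ Sset ∧
    (∀ a ∈ Sset, ∀ b ∈ Sset, a * b ∈ Sset) ∧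
    (∀ a : A, ∀ t ∈ Sset,
      (∃ t' ∈ Sset, ∃ b : A, t' * a = b * t) ∧
      (∃ t'' ∈ Sset, ∃ c : A, a * t'' = t * c)) := by
  subst hSset
  have hymul' : ∀ k k' : Fin r → ℤ, (∀ i, 0 ≤ k i) → (∀ i, 0 ≤ k' i) →
      y k * y k' = ((s ^ qform r Q k k' : Rˣ) : R) • y (k + k') := hymul
  -- unit smul cancellation helper
  have ucan : ∀ (u : Rˣ) (x z : A), ((u : Rˣ) : R) • x = z → x = ((u⁻¹ : Rˣ) : R) • z := by
    intro u x z h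
    rw [← h, smul_smul, ← Units.val_mul, inv_mul_cancel, Units.val_one, one_smul]
  -- q-commutation of span elements past monomials (right form)
  have comm_right : ∀ (j : Fin r → ℤ), (∀ i, 0 ≤ j i) → ∀ v : A,
      v ∈ Submodule.span R (y '' {k : Fin r → ℤ | ∀ i, 0 ≤ k i}) →
      ∃ w : A, v * y j = y j * w := by
    intro j hj v hv
    induction hv using Submodule.span_induction with
    | mem x hx =>
      obtain ⟨p, hp, rfl⟩ := hx
      refine ⟨((s ^ qform r Q p j * (s ^ qform r Q j p)⁻¹ : Rˣ) : R) • y p, ?_⟩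
      rw [hymul' p j hp hj, mul_smul_comm, hymul' j p hj hp, smul_smul, ← Units.val_mul,
        inv_mul_cancel_right, add_comm j p]
    | zero => exact ⟨0, by simp⟩
    | add x x' hx hx' ihx ihx' =>
      obtain ⟨w1, h1⟩ := ihx; obtain ⟨w2, h2⟩ := ihx'
      exact ⟨w1 + w2, by rw [add_mul, mul_add, h1, h2]⟩
    | smul c x hx ih =>
      obtain ⟨w, h⟩ := ih
      exact ⟨c • w, by rw [smul_mul_assoc, mul_smul_comm, h]⟩
  -- (left form)
  have comm_left : ∀ (j : Fin r → ℤ), (∀ i, 0 ≤ j i) → ∀ v : A,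
      v ∈ Submodule.span R (y '' {k : Fin r → ℤ | ∀ i, 0 ≤ k i}) →
      ∃ w : A, y j * v = w * y j := by
    intro j hj v hv
    induction hv using Submodule.span_induction with
    | mem x hx =>
      obtain ⟨p, hp, rfl⟩ := hx
      refine ⟨((s ^ qform r Q j p * (s ^ qform r Q p j)⁻¹ : Rˣ) : R) • y p, ?_⟩
      rw [hymul' j p hj hp, smul_mul_assoc, hymul' p j hp hj, smul_smul, ← Units.val_mul,
        inv_mul_cancel_right, add_comm j p]
    | zero => exact ⟨0, by simp⟩
    | add x x' hx hx' ihx ihx' =>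
      obtain ⟨w1, h1⟩ := ihx; obtain ⟨w2, h2⟩ := ihx'
      exact ⟨w1 + w2, by rw [mul_add, add_mul, h1, h2]⟩
    | smul c x hx ih =>
      obtain ⟨w, h⟩ := ih
      exact ⟨c • w, by rw [mul_smul_comm, smul_mul_assoc, h]⟩
  refine ⟨⟨0, 0, fun i => le_refl 0, by simp [hy0]⟩, ?_, ?_⟩
  · rintro a ⟨m1, k1, hk1, rfl⟩ b ⟨m2, k2, hk2, rfl⟩
    refine ⟨m1 + m2 + qform r Q k1 k2, k1 + k2, fun i => add_nonneg (hk1 i) (hk2 i), ?_⟩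
    rw [smul_mul_assoc, mul_smul_comm, hymul' k1 k2 hk1 hk2, smul_smul, smul_smul,
      ← Units.val_mul, ← Units.val_mul, ← zpow_add, ← zpow_add]
  · rintro a t ⟨m, k, hk, rfl⟩
    obtain ⟨l, hl, hv⟩ := habsorb a
    have hkl : ∀ i, 0 ≤ (k + l) i := fun i => add_nonneg (hk i) (hl i)
    have hlk : ∀ i, 0 ≤ (l + k) i := fun i => add_nonneg (hl i) (hk i)
    constructor
    · -- left Ore
      obtain ⟨w, hw⟩ := comm_left k hk (y l * a) hv
      refine ⟨((s ^ qform r Q k l : Rˣ) : R) • y (k + l),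
        ⟨qform r Q k l, k + l, hkl, rfl⟩, ((s ^ (-m) : Rˣ) : R) • w, ?_⟩
      have h1 : (((s ^ qform r Q k l : Rˣ) : R) • y (k + l)) * a = (y k * y l) * a := by
        rw [hymul' k l hk hl]
      rw [h1, mul_assoc, hw, smul_mul_assoc, mul_smul_comm, smul_smul, ← Units.val_mul,
        ← zpow_add, neg_add_cancel, zpow_zero, Units.val_one, one_smul]
    · -- right Ore
      by_cases hyl : y l = 0
      · refine ⟨y (l + k), ⟨0, l + k, hlk, by simp⟩, 0, ?_⟩
        have : y (l + k) = 0 := by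
          have h0 := ucan _ _ _ (hymul' l k hl hk).symm
          rw [h0, hyl, zero_mul, smul_zero]
        rw [this, mul_zero, mul_zero]
      · obtain ⟨w, hw⟩ := comm_right (l + k) hlk (y l * a) hv
        refine ⟨y (l + k), ⟨0, l + k, hlk, by simp⟩,
          ((s ^ (-(qform r Q l k) - m) : Rˣ) : R) • w, ?_⟩
        apply mul_left_cancel₀ hyl
        have hexp : y (l + k) = ((s ^ (-(qform r Q l k)) : Rˣ) : R) • (y l * y k) := by
          have := ucan _ _ _ (hymul' l k hl hk).symm
          rw [this, zpow_neg]
        calc y l * (a * y (l + k)) = (y l * a) * y (l + k) := by rw [mul_assoc]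
          _ = y (l + k) * w := hw
          _ = ((s ^ (-(qform r Q l k)) : Rˣ) : R) • (y l * (y k * w)) := by
              rw [hexp, smul_mul_assoc, mul_assoc]
          _ = y l * ((((s ^ m : Rˣ) : R) • y k) * (((s ^ (-(qform r Q l k) - m) : Rˣ) : R) • w)) := by
              have hc : (((s ^ m : Rˣ) : R) • y k) * (((s ^ (-(qform r Q l k) - m) : Rˣ) : R) • w)
                  = ((s ^ (-(qform r Q l k)) : Rˣ) : R) • (y k * w) := by
                rw [smul_mul_assoc, mul_smul_comm, smul_smul, ← Units.val_mul, ← zpow_add]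
                congr 3
                ring
              rw [hc, mul_smul_comm]
end

section
/- Let Λ ⊆ ℤ^r be a submonoid finitely generated as an ℕ-module, and let A(Q;Λ) be the corresponding monomial subalgebra of the quantum torus T(Q) over a field k = Fr(R). Then the Gelfand–Kirillov dimension of A(Q;Λ) equals the rank of the subgroup of ℤ^r generated by Λ. -/
open Pointwise Filter

section SpanLemmas
variable {K T : Type*} [Field K] [Ring T] [Algebra K T]
variable {G : Type*} [AddCommMonoid G] {x : G → T}

theorem span_image_mul (hx : ∀ k k', ∃ c : Kˣ, x k * x k' = (c : K) • x (k + k'))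
    (A B : Set G) :
    Submodule.span K (x '' A) * Submodule.span K (x '' B) = Submodule.span K (x '' (A + B)) := by
  rw [Submodule.span_mul_span]
  apply le_antisymm
  · rw [Submodule.span_le]
    rintro t ht
    obtain ⟨u, hu, v, hv, rfl⟩ := Set.mem_mul.1 ht
    obtain ⟨a, ha, rfl⟩ := hu
    obtain ⟨b, hb, rfl⟩ := hv
    obtain ⟨c, hc⟩ := hx a b
    rw [hc]
    exact Submodule.smul_mem _ _ (Submodule.subset_span ⟨a + b, Set.add_mem_add ha hb, rfl⟩)
  · rw [Submodule.span_le]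
    rintro t ⟨g, hg, rfl⟩
    obtain ⟨a, ha, b, hb, rfl⟩ := Set.mem_add.1 hg
    obtain ⟨c, hc⟩ := hx a b
    have h2 : x (a + b) = ((c⁻¹ : Kˣ) : K) • (x a * x b) := by
      rw [hc, smul_smul]; simp
    rw [h2]
    exact Submodule.smul_mem _ _ (Submodule.subset_span
      (Set.mul_mem_mul ⟨a, ha, rfl⟩ ⟨b, hb, rfl⟩))

theorem span_image_pow (hx0 : x 0 = 1)
    (hx : ∀ k k', ∃ c : Kˣ, x k * x k' = (c : K) • x (k + k'))
    (A : Set G) (n : ℕ) :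
    Submodule.span K (x '' A) ^ n = Submodule.span K (x '' (n • A)) := by
  induction n with
  | zero =>
    rw [pow_zero, zero_nsmul]
    have : (0 : Set G) = {0} := rfl
    rw [this, Set.image_singleton, hx0, Submodule.one_eq_span]
  | succ n ih =>
    rw [pow_succ, ih, span_image_mul hx, succ_nsmul]

theorem finrank_span_image (hindep : LinearIndependent K x) (F : Finset G) :
    Module.finrank K ↥(Submodule.span K (x '' ↑F)) = F.card := by
  classical
  rw [← Finset.coe_image, finrank_span_finset_eq_card, Finset.card_image_of_injective _ hindep.injective]
  have h := hindep.comp ((↑) : (↑F : Set G) → G) Subtype.val_injective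
  have h2 := LinearIndepOn.id_image (v := x) (s := (↑F : Set G)) h
  have : (↑(F.image x) : Set T) = x '' ↑F := Finset.coe_image
  rw [← this] at h2
  exact h2
end SpanLemmas

section FinsetNsmul
variable {G : Type*} [AddCommMonoid G] [DecidableEq G]

theorem zero_mem_nsmul {F : Finset G} (h0 : (0:G) ∈ F) (n : ℕ) : (0:G) ∈ n • F := by
  induction n with
  | zero => simp [zero_nsmul, Finset.mem_zero]
  | succ n ih => rw [succ_nsmul]; simpa using Finset.add_mem_add ih h0

theorem nsmul_subset_nsmul {F : Finset G} (h0 : (0:G) ∈ F) {i n : ℕ} (h : i ≤ n) :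
    i • F ⊆ n • F := by
  obtain ⟨c, rfl⟩ := Nat.exists_eq_add_of_le h
  rw [add_nsmul]
  intro g hg
  simpa using Finset.add_mem_add hg (zero_mem_nsmul h0 c)

theorem sum_mem_nsmul {ι : Type*} (s : Finset ι) (g : ι → G) (m : ι → ℕ) (F : Finset G)
    (h : ∀ i ∈ s, g i ∈ m i • F) : (∑ i ∈ s, g i) ∈ (∑ i ∈ s, m i) • F := by
  classical
  induction s using Finset.induction_on with
  | empty => simp [zero_nsmul, Finset.mem_zero]
  | insert a s hnot ih =>
    rw [Finset.sum_insert hnot, Finset.sum_insert hnot, add_nsmul]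
    exact Finset.add_mem_add (h a (Finset.mem_insert_self a s))
      (ih fun i hi => h i (Finset.mem_insert_of_mem hi))

theorem nsmul_mem_nsmul {F : Finset G} {g : G} {m : ℕ} (h : g ∈ m • F) (a : ℕ) :
    a • g ∈ (a * m) • F := by
  induction a with
  | zero => simp [zero_nsmul, Finset.mem_zero]
  | succ a ih =>
    rw [succ_nsmul, Nat.succ_mul, add_nsmul]
    exact Finset.add_mem_add ih h

theorem exists_mem_nsmul_of_mem_closure {F : Finset G} {k : G}
    (hk : k ∈ AddSubmonoid.closure (F : Set G)) : ∃ n : ℕ, k ∈ n • F := by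
  induction hk using AddSubmonoid.closure_induction with
  | mem f hf => exact ⟨1, by rwa [one_nsmul]⟩
  | zero => exact ⟨0, by simp [zero_nsmul, Finset.mem_zero]⟩
  | add a b _ _ iha ihb =>
    obtain ⟨n, hn⟩ := iha
    obtain ⟨m, hm⟩ := ihb
    exact ⟨n + m, by rw [add_nsmul]; exact Finset.add_mem_add hn hm⟩
end FinsetNsmul

section Counting
variable {r : ℕ}

theorem card_nsmul_le (N : Submodule ℤ (Fin r → ℤ)) (F : Finset (Fin r → ℤ))
    (hF : ∀ f ∈ F, f ∈ N) :
    ∃ M : ℕ, 1 ≤ M ∧ ∀ n : ℕ, (n • F).card ≤ (2 * M * n + 1) ^ (Module.finrank ℤ ↥N) := by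
  classical
  haveI : Module.Finite ℤ ↥N := Module.Finite.iff_fg.2 (IsNoetherian.noetherian N)
  let b := Module.Free.chooseBasis ℤ ↥N
  set ι := Module.Free.ChooseBasisIndex ℤ ↥N
  set M : ℕ := 1 + F.attach.sup (fun f => Finset.univ.sup fun j : ι =>
    (b.repr ⟨f.1, hF _ f.2⟩ j).natAbs) with hM
  refine ⟨M, Nat.le_add_right 1 _, fun n => ?_⟩
  have hMf : ∀ (f) (hf : f ∈ F) (j : ι), (b.repr ⟨f, hF f hf⟩ j).natAbs ≤ M := by
    intro f hf j
    calc (b.repr ⟨f, hF f hf⟩ j).natAbs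
        ≤ Finset.univ.sup fun j : ι => (b.repr ⟨f, hF f hf⟩ j).natAbs :=
          Finset.le_sup (f := fun j : ι => (b.repr ⟨f, hF f hf⟩ j).natAbs)
            (Finset.mem_univ j)
      _ ≤ F.attach.sup (fun f => Finset.univ.sup fun j : ι =>
          (b.repr ⟨f.1, hF _ f.2⟩ j).natAbs) :=
          Finset.le_sup (f := fun f : {x // x ∈ F} => Finset.univ.sup fun j : ι =>
            (b.repr ⟨f.1, hF _ f.2⟩ j).natAbs) (Finset.mem_attach F ⟨f, hf⟩)
      _ ≤ M := by omega
  have key : ∀ (m : ℕ), ∀ g ∈ m • F, ∃ hg : g ∈ N, ∀ j : ι,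
      (b.repr ⟨g, hg⟩ j).natAbs ≤ m * M := by
    intro m
    induction m with
    | zero =>
      intro g hg
      rw [zero_nsmul, Finset.mem_zero] at hg
      subst hg
      refine ⟨N.zero_mem, fun j => ?_⟩
      have : (⟨(0 : Fin r → ℤ), N.zero_mem⟩ : ↥N) = 0 := rfl
      simp [this]
    | succ m ih =>
      intro g hg
      rw [succ_nsmul] at hg
      obtain ⟨u, hu, v, hv, rfl⟩ := Finset.mem_add.1 hg
      obtain ⟨hu', hrep⟩ := ih u hu
      refine ⟨N.add_mem hu' (hF v hv), fun j => ?_⟩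
      have : (⟨u + v, N.add_mem hu' (hF v hv)⟩ : ↥N) =
          ⟨u, hu'⟩ + ⟨v, hF v hv⟩ := rfl
      rw [this, map_add]
      calc ((b.repr ⟨u, hu'⟩ + b.repr ⟨v, hF v hv⟩) j).natAbs
          ≤ (b.repr ⟨u, hu'⟩ j).natAbs + (b.repr ⟨v, hF v hv⟩ j).natAbs := by
            simpa using Int.natAbs_add_le _ _
        _ ≤ m * M + M := Nat.add_le_add (hrep j) (hMf v hv j)
        _ = (m + 1) * M := by ring
  -- injection into a box
  set φ : (Fin r → ℤ) → (ι → ℤ) := fun g j => if hg : g ∈ N then b.repr ⟨g, hg⟩ j else 0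
  have hinj : Set.InjOn φ ↑(n • F) := by
    intro g hg g' hg' hEq
    obtain ⟨hgN, -⟩ := key n g hg
    obtain ⟨hgN', -⟩ := key n g' hg'
    have : b.repr ⟨g, hgN⟩ = b.repr ⟨g', hgN'⟩ := by
      ext j
      have := congrFun hEq j
      simpa [φ, dif_pos hgN, dif_pos hgN'] using this
    have := b.repr.injective this
    exact congrArg Subtype.val this
  have hmaps : ∀ g ∈ n • F, φ g ∈ Fintype.piFinset fun _ : ι =>
      Finset.Icc (-(n * M : ℤ)) (n * M) := by
    intro g hg
    obtain ⟨hgN, hrep⟩ := key n g hg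
    rw [Fintype.mem_piFinset]
    intro j
    rw [Finset.mem_Icc]
    have h1 : (b.repr ⟨g, hgN⟩ j).natAbs ≤ n * M := hrep j
    have h2 : |b.repr ⟨g, hgN⟩ j| ≤ (n * M : ℤ) := by
      rw [Int.abs_eq_natAbs]; exact_mod_cast h1
    have := abs_le.1 h2
    simp [φ, dif_pos hgN]
    constructor <;> [linarith [this.1]; linarith [this.2]]
  calc (n • F).card ≤ (Fintype.piFinset fun _ : ι =>
        Finset.Icc (-(n * M : ℤ)) (n * M)).card :=
        Finset.card_le_card_of_injOn φ hmaps hinj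
    _ = (2 * M * n + 1) ^ (Module.finrank ℤ ↥N) := by
        rw [Fintype.card_piFinset]
        simp only [Int.card_Icc]
        rw [Finset.prod_const]
        congr 1
        · rw [show ((n : ℤ) * M + 1 - -((n : ℤ) * M)) = ((2 * M * n + 1 : ℕ) : ℤ) by
            push_cast; ring, Int.toNat_natCast]
        · rw [Finset.card_univ]
          exact (Module.finrank_eq_card_chooseBasisIndex ℤ ↥N).symm
end Counting

section LowerFamily
variable {r : ℕ}

def ratMap (r : ℕ) : (Fin r → ℤ) →+ (Fin r → ℚ) where
  toFun v := fun i => (v i : ℚ)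
  map_zero' := by ext i; simp
  map_add' u v := by ext i; push_cast; simp

theorem ratMap_injective : Function.Injective (ratMap r) := fun u v h =>
  funext fun i => Int.cast_injective (congrFun h i)

theorem finrank_span_ratMap (Λ : AddSubmonoid (Fin r → ℤ)) :
    Module.finrank ℚ ↥(Submodule.span ℚ (ratMap r '' (Λ : Set (Fin r → ℤ)))) =
      Module.finrank ℤ ↥(AddSubgroup.toIntSubmodule
        (AddSubgroup.closure (Λ : Set (Fin r → ℤ)))) := by
  classical
  set G := AddSubgroup.closure (Λ : Set (Fin r → ℤ)) with hG
  set N := AddSubgroup.toIntSubmodule G with hN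
  haveI : Module.Finite ℤ ↥N := Module.Finite.iff_fg.2 (IsNoetherian.noetherian N)
  let b := Module.Free.chooseBasis ℤ ↥N
  set ι := Module.Free.ChooseBasisIndex ℤ ↥N
  set u : ι → (Fin r → ℚ) := fun j => ratMap r ((b j : Fin r → ℤ)) with hu
  -- step a: span of Λ = span of G
  have hstepa : Submodule.span ℚ (ratMap r '' (Λ : Set (Fin r → ℤ))) =
      Submodule.span ℚ (ratMap r '' (G : Set (Fin r → ℤ))) := by
    apply le_antisymm
    · exact Submodule.span_mono (Set.image_mono (AddSubgroup.subset_closure))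
    · rw [Submodule.span_le]
      rintro _ ⟨g, hg, rfl⟩
      induction hg using AddSubgroup.closure_induction with
      | mem k hk => exact Submodule.subset_span (Set.mem_image_of_mem _ hk)
      | zero => rw [map_zero]; exact Submodule.zero_mem _
      | add a c _ _ iha ihc => rw [map_add]; exact Submodule.add_mem _ iha ihc
      | neg a _ iha => rw [map_neg]; exact Submodule.neg_mem _ iha
  -- step b: span of G = span of range u
  have hstepb : Submodule.span ℚ (ratMap r '' (G : Set (Fin r → ℤ))) =
      Submodule.span ℚ (Set.range u) := by
    apply le_antisymm
    · rw [Submodule.span_le]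
      rintro _ ⟨g, hg, rfl⟩
      have hgN : g ∈ N := hg
      have hsum := b.sum_repr ⟨g, hgN⟩
      have : ratMap r g = ∑ j : ι, ((b.repr ⟨g, hgN⟩ j : ℚ) • u j) := by
        have := congrArg (fun z : ↥N => ratMap r (z : Fin r → ℤ)) hsum
        simp only at this
        rw [← this]
        rw [show ((∑ j : ι, b.repr ⟨g, hgN⟩ j • b j : ↥N) : Fin r → ℤ)
            = ∑ j : ι, (b.repr ⟨g, hgN⟩ j • (b j : Fin r → ℤ)) from by push_cast; rfl]
        rw [map_sum]
        refine Finset.sum_congr rfl fun j _ => ?_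
        rw [map_zsmul, Int.cast_smul_eq_zsmul]
      rw [this]
      exact Submodule.sum_mem _ fun j _ => Submodule.smul_mem _ _
        (Submodule.subset_span (Set.mem_range_self j))
    · rw [Submodule.span_le]
      rintro _ ⟨j, rfl⟩
      exact Submodule.subset_span (Set.mem_image_of_mem _ (b j).2)
  have hindu : LinearIndependent ℚ u := by
    have h1 : LinearIndependent ℤ (fun j : ι => ((b j : Fin r → ℤ))) :=
      b.linearIndependent.map' N.subtype (Submodule.ker_subtype N)
    have h2 : LinearIndependent ℤ u := by
      have := h1.map' (ratMap r).toIntLinearMap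
        (LinearMap.ker_eq_bot.2 ratMap_injective)
      exact this
    exact (LinearIndependent.iff_fractionRing ℤ ℚ).1 h2
  rw [hstepa, hstepb, finrank_span_eq_card hindu,
    Module.finrank_eq_card_chooseBasisIndex ℤ ↥N]

end LowerFamily

theorem exists_lattice_family (Λ : AddSubmonoid (Fin r → ℤ)) :
    ∃ lam : Fin (Module.finrank ℤ ↥(AddSubgroup.toIntSubmodule
        (AddSubgroup.closure (Λ : Set (Fin r → ℤ))))) → (Fin r → ℤ),
      (∀ j, lam j ∈ Λ) ∧
      ∀ a a' : Fin (Module.finrank ℤ ↥(AddSubgroup.toIntSubmodule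
        (AddSubgroup.closure (Λ : Set (Fin r → ℤ))))) → ℕ,
        ∑ j, a j • lam j = ∑ j, a' j • lam j → a = a' := by
  classical
  set d := Module.finrank ℤ ↥(AddSubgroup.toIntSubmodule
    (AddSubgroup.closure (Λ : Set (Fin r → ℤ)))) with hd
  obtain ⟨t, hts, htspan, htind⟩ :=
    exists_linearIndependent ℚ (ratMap r '' (Λ : Set (Fin r → ℤ)))
  have htfin : t.Finite := htind.set_finite_of_isNoetherian
  haveI : Fintype t := htfin.fintype
  have h1 : Module.finrank ℚ ↥(Submodule.span ℚ t) = t.toFinset.card :=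
    finrank_span_set_eq_card htind
  have h2 : Fintype.card t = d := by
    rw [← Set.toFinset_card, ← h1, htspan, finrank_span_ratMap]
  let e : Fin d ≃ t := (Fintype.equivFinOfCardEq h2).symm
  have hx : ∀ w : t, ∃ k, k ∈ Λ ∧ ratMap r k = ↑w := by
    intro w
    obtain ⟨k, hk, hkk⟩ := hts w.2
    exact ⟨k, hk, hkk⟩
  choose g hg1 hg2 using hx
  refine ⟨fun j => g (e j), fun j => hg1 (e j), ?_⟩
  intro a a' hsum
  have hQ : ∑ j, (a j : ℚ) • ((e j : Fin r → ℚ)) =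
      ∑ j, (a' j : ℚ) • ((e j : Fin r → ℚ)) := by
    have hc := congrArg (ratMap r) hsum
    rw [map_sum, map_sum] at hc
    simp only [map_nsmul, hg2] at hc
    simpa only [Nat.cast_smul_eq_nsmul] using hc
  have hv := htind.comp e e.injective
  rw [Fintype.linearIndependent_iff] at hv
  have hz := hv (fun j => (a j : ℚ) - (a' j : ℚ)) ?_
  · funext j
    have := sub_eq_zero.1 (hz j)
    exact_mod_cast this
  · simp only [sub_smul]
    rw [Finset.sum_sub_distrib]
    simp only [Function.comp_apply]
    rw [hQ, sub_self]
open Filter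

theorem lognat_nonneg (m : ℕ) : 0 ≤ Real.log m := by
  rcases Nat.eq_zero_or_pos m with h | h
  · simp [h]
  · exact Real.log_nonneg (by exact_mod_cast h)

theorem tendsto_const_div_log (c : ℝ) :
    Tendsto (fun n : ℕ => c / Real.log n) atTop (nhds 0) := by
  have h1 : Tendsto (fun n : ℕ => Real.log n) atTop atTop :=
    Real.tendsto_log_atTop.comp tendsto_natCast_atTop_atTop
  have h2 := h1.inv_tendsto_atTop
  have h3 := h2.const_mul c
  simpa [div_eq_mul_inv] using h3

theorem tendsto_upper_seq (M d : ℕ) (hM : 1 ≤ M) :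
    Tendsto (fun n : ℕ => (d : ℝ) * Real.log ((2*M*n+1 : ℕ) : ℝ) / Real.log n)
      atTop (nhds d) := by
  apply tendsto_of_tendsto_of_tendsto_of_le_of_le' (g := fun _ : ℕ => (d:ℝ))
      (h := fun n : ℕ => (d:ℝ) + (d * Real.log (3*M)) / Real.log n)
      tendsto_const_nhds
  · have h0 := tendsto_const_div_log ((d:ℝ) * Real.log (3*M))
    simpa using tendsto_const_nhds.add h0
  · filter_upwards [eventually_ge_atTop 2] with n hn
    have hlogn : 0 < Real.log n := Real.log_pos (by exact_mod_cast hn)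
    have harg : (n : ℝ) ≤ ((2*M*n+1 : ℕ) : ℝ) := by
      have : n ≤ 2*M*n+1 := by nlinarith
      exact_mod_cast this
    have hlog : Real.log n ≤ Real.log ((2*M*n+1 : ℕ) : ℝ) :=
      Real.log_le_log (by positivity) harg
    rw [le_div_iff₀ hlogn]
    calc (d:ℝ) * Real.log n ≤ (d:ℝ) * Real.log ((2*M*n+1 : ℕ) : ℝ) := by
          exact mul_le_mul_of_nonneg_left hlog (by positivity)
      _ = _ := rfl
  · filter_upwards [eventually_ge_atTop 2] with n hn
    have hn1 : (1:ℕ) ≤ n := le_trans (by norm_num) hn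
    have hlogn : 0 < Real.log n := Real.log_pos (by exact_mod_cast hn)
    have key : Real.log ((2*M*n+1 : ℕ) : ℝ) ≤ Real.log (3*M) + Real.log n := by
      have h1 : ((2*M*n+1 : ℕ) : ℝ) ≤ (3*M : ℝ) * n := by
        have : (2*M*n+1 : ℕ) ≤ 3*M*n := by nlinarith
        calc ((2*M*n+1 : ℕ) : ℝ) ≤ ((3*M*n : ℕ) : ℝ) := by exact_mod_cast this
          _ = (3*M : ℝ) * n := by push_cast; ring
      calc Real.log ((2*M*n+1 : ℕ) : ℝ) ≤ Real.log ((3*M : ℝ) * n) :=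
            Real.log_le_log (by positivity) h1
        _ = Real.log (3*M) + Real.log n := Real.log_mul (by positivity) (by positivity)
    calc (d:ℝ) * Real.log ((2*M*n+1 : ℕ) : ℝ) / Real.log n
        ≤ (d:ℝ) * (Real.log (3*M) + Real.log n) / Real.log n := by
          apply div_le_div_of_nonneg_right (hc := hlogn.le)
          exact mul_le_mul_of_nonneg_left key (by positivity)
      _ = (d:ℝ) + (d:ℝ) * Real.log (3*M) / Real.log n := by
          field_simp
          ring

theorem ev_le_upper (v : ℕ → ℕ) (d M : ℕ) (hv : ∀ n, v n ≤ (2*M*n+1)^d) :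
    ∀ᶠ n : ℕ in atTop, Real.log (v n) / Real.log n ≤
      (d:ℝ) * Real.log ((2*M*n+1 : ℕ) : ℝ) / Real.log n := by
  filter_upwards [eventually_ge_atTop 2] with n hn
  have hlogn : 0 < Real.log n := Real.log_pos (by exact_mod_cast hn)
  have hlog : Real.log (v n) ≤ (d:ℝ) * Real.log ((2*M*n+1 : ℕ) : ℝ) := by
    rcases Nat.eq_zero_or_pos (v n) with h | h
    · rw [h]
      simp only [Nat.cast_zero, Real.log_zero]
      exact mul_nonneg (by positivity) (lognat_nonneg _)
    · calc Real.log (v n) ≤ Real.log (((2*M*n+1)^d : ℕ) : ℝ) :=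
          Real.log_le_log (by exact_mod_cast h) (by exact_mod_cast hv n)
        _ = (d:ℝ) * Real.log ((2*M*n+1 : ℕ) : ℝ) := by
          rw [Nat.cast_pow, Real.log_pow]
  exact div_le_div_of_nonneg_right hlog hlogn.le

theorem loglog_cobounded (v : ℕ → ℕ) :
    IsCoboundedUnder (· ≤ ·) atTop (fun n : ℕ => Real.log (v n) / Real.log n) := by
  apply isCoboundedUnder_le_of_eventually_le atTop (x := 0)
  filter_upwards with n
  exact div_nonneg (lognat_nonneg _) (lognat_nonneg _)

theorem limsup_le_of_growth (v : ℕ → ℕ) (d M : ℕ) (hM : 1 ≤ M)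
    (hv : ∀ n, v n ≤ (2*M*n+1)^d) :
    limsup (fun n : ℕ => Real.log (v n) / Real.log n) atTop ≤ (d:ℝ) := by
  calc limsup (fun n : ℕ => Real.log (v n) / Real.log n) atTop
      ≤ limsup (fun n : ℕ => (d:ℝ) * Real.log ((2*M*n+1 : ℕ) : ℝ) / Real.log n) atTop :=
        limsup_le_limsup (ev_le_upper v d M hv) (loglog_cobounded v)
          (tendsto_upper_seq M d hM).isBoundedUnder_le
    _ = (d:ℝ) := (tendsto_upper_seq M d hM).limsup_eq

theorem tendsto_lower_seq (C d : ℕ) (hC : 1 ≤ C) :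
    Tendsto (fun n : ℕ => (d:ℝ) * (Real.log n - Real.log C) / Real.log n)
      atTop (nhds d) := by
  have hev : ∀ᶠ n : ℕ in atTop,
      (d:ℝ) - (d:ℝ) * Real.log C / Real.log n =
      (d:ℝ) * (Real.log n - Real.log C) / Real.log n := by
    filter_upwards [eventually_ge_atTop 2] with n hn
    have hlogn : 0 < Real.log n := Real.log_pos (by exact_mod_cast hn)
    field_simp
  apply Tendsto.congr' hev
  have h0 := tendsto_const_div_log ((d:ℝ) * Real.log C)
  simpa using tendsto_const_nhds.sub h0

theorem limsup_eq_of_growth (v : ℕ → ℕ) (d M C : ℕ) (hM : 1 ≤ M) (hC : 1 ≤ C)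
    (hub : ∀ n, v n ≤ (2*M*n+1)^d)
    (hlb : ∀ n : ℕ, ((n:ℝ)/(C:ℝ))^d ≤ (v n : ℝ)) :
    limsup (fun n : ℕ => Real.log (v n) / Real.log n) atTop = (d:ℝ) := by
  apply Tendsto.limsup_eq
  apply tendsto_of_tendsto_of_tendsto_of_le_of_le'
    (tendsto_lower_seq C d hC) (tendsto_upper_seq M d hM)
  · filter_upwards [eventually_ge_atTop 2] with n hn
    have hnn : 0 < n := lt_of_lt_of_le (by norm_num) hn
    have hn0 : (0:ℝ) < (n:ℝ) := by exact_mod_cast hnn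
    have hC0 : (0:ℝ) < (C:ℝ) := by exact_mod_cast hC
    have hlogn : 0 < Real.log n := Real.log_pos (by exact_mod_cast hn)
    have h1 : Real.log (((n:ℝ)/C)^d) ≤ Real.log (v n) :=
      Real.log_le_log (by positivity) (hlb n)
    have h2 : Real.log (((n:ℝ)/C)^d) = (d:ℝ) * (Real.log n - Real.log C) := by
      rw [Real.log_pow, Real.log_div (ne_of_gt hn0) (ne_of_gt hC0)]
    calc (d:ℝ) * (Real.log n - Real.log C) / Real.log n
        = Real.log (((n:ℝ)/C)^d) / Real.log n := by rw [h2]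
      _ ≤ Real.log (v n) / Real.log n := div_le_div_of_nonneg_right h1 hlogn.le
  · exact ev_le_upper v d M hub

open Filter

/-- Gelfand–Kirillov dimension of an algebra `A` over a field `K`: the supremum over
finite-dimensional generating subspaces `V` of `limsup_n log dim(∑_{i≤n} V^i) / log n`. -/
noncomputable def GKdim (K A : Type*) [Field K] [Ring A] [Algebra K A] : ℝ :=
  sSup {d : ℝ | ∃ V : Submodule K A, V.FG ∧ Algebra.adjoin K (V : Set A) = ⊤ ∧
    d = Filter.limsup (fun n : ℕ =>
      Real.log (Module.finrank K ↥(⨆ i ∈ Finset.range (n + 1), V ^ i)) / Real.log n)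
      Filter.atTop}

/-- The GK dimension of the monomial subalgebra `A(Q;Λ)` of a quantum torus over a field
equals the rank of the subgroup of `ℤ^r` generated by `Λ`. -/
theorem gkdim_monomial_subalgebra
    (K T : Type*) [Field K] [Ring T] [Algebra K T]
    (s : Kˣ) (r : ℕ) (Q : Fin r → Fin r → ℤ) (hQ : ∀ i j, Q j i = -Q i j)
    (x : (Fin r → ℤ) → T) (hx0 : x 0 = 1)
    (hmul : ∀ k k' : Fin r → ℤ, x k * x k' =
      ((s ^ (∑ i, ∑ j, Q i j * k i * k' j) : Kˣ) : K) • x (k + k'))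
    (hindep : LinearIndependent K x)
    (Λ : AddSubmonoid (Fin r → ℤ)) (hΛ : Λ.FG)
    (S : Subalgebra K T)
    (hS : Subalgebra.toSubmodule S = Submodule.span K (x '' (Λ : Set (Fin r → ℤ)))) :
    GKdim K S =
      (Module.finrank ℤ ↥(AddSubgroup.closure (Λ : Set (Fin r → ℤ))) : ℝ) := by
  classical
  have hx : ∀ k k' : Fin r → ℤ, ∃ c : Kˣ, x k * x k' = (c : K) • x (k + k') :=
    fun k k' => ⟨s ^ (∑ i, ∑ j, Q i j * k i * k' j), hmul k k'⟩
  have hxadd : ∀ a b : Fin r → ℤ, ∃ c : Kˣ, x (a + b) = (c : K) • (x a * x b) := by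
    intro a b
    obtain ⟨c, hc⟩ := hx a b
    exact ⟨c⁻¹, by rw [hc, smul_smul]; simp⟩
  set N : Submodule ℤ (Fin r → ℤ) :=
    AddSubgroup.toIntSubmodule (AddSubgroup.closure (Λ : Set (Fin r → ℤ))) with hN
  set d : ℕ := Module.finrank ℤ ↥N with hd
  -- the target rank equals d
  have hfr : Module.finrank ℤ ↥(AddSubgroup.closure (Λ : Set (Fin r → ℤ))) = d := by
    have e : ↥(AddSubgroup.closure (Λ : Set (Fin r → ℤ))) ≃+ ↥N :=
      ⟨⟨fun a => ⟨a.1, a.2⟩, fun a => ⟨a.1, a.2⟩, fun _ => rfl, fun _ => rfl⟩, fun _ _ => rfl⟩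
    exact e.toIntLinearEquiv.finrank_eq
  rw [hfr]
  have hmem : ∀ k, k ∈ Λ → x k ∈ S := by
    intro k hk
    have h1 : x k ∈ Submodule.span K (x '' (Λ : Set (Fin r → ℤ))) :=
      Submodule.subset_span ⟨k, hk, rfl⟩
    rw [← hS] at h1
    exact h1
  have hmemN : ∀ k, k ∈ Λ → k ∈ N := fun k hk => AddSubgroup.subset_closure hk
  set Sval : ↥S →ₗ[K] T := S.val.toLinearMap with hSval
  have hinj : Function.Injective Sval := fun a b h => Subtype.ext h
  -- commutation of ⨆-pow with the inclusion map
  have hmapsup : ∀ (V : Submodule K ↥S) (n : ℕ),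
      (⨆ i ∈ Finset.range (n+1), V ^ i).map Sval =
        ⨆ i ∈ Finset.range (n+1), (V.map Sval) ^ i := by
    intro V n
    simp_rw [Submodule.map_iSup]
    refine iSup_congr fun i => iSup_congr fun _ => ?_
    exact Submodule.map_pow V S.val i
  have hrank_map : ∀ (V : Submodule K ↥S) (n : ℕ),
      Module.finrank K ↥(⨆ i ∈ Finset.range (n+1), V ^ i) =
        Module.finrank K ↥(⨆ i ∈ Finset.range (n+1), (V.map Sval) ^ i) := by
    intro V n
    rw [← hmapsup]
    exact (Submodule.equivMapOfInjective Sval hinj _).finrank_eq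
  -- general upper bound
  have hUB : ∀ V : Submodule K ↥S, V.FG →
      limsup (fun n : ℕ =>
        Real.log (Module.finrank K ↥(⨆ i ∈ Finset.range (n + 1), V ^ i)) / Real.log n)
        atTop ≤ (d : ℝ) := by
    intro V hV
    obtain ⟨t, ht⟩ := hV
    -- find a finite monomial support for V
    have hsupp : ∀ w : ↥S, ∃ Fw : Finset (Fin r → ℤ), ↑Fw ⊆ (Λ : Set (Fin r → ℤ)) ∧
        (w : T) ∈ Submodule.span K (x '' ↑Fw) := by
      intro w
      have hw : (w : T) ∈ Submodule.span K (x '' (Λ : Set (Fin r → ℤ))) := by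
        rw [← hS]; exact w.2
      obtain ⟨u, hu_sub, hw_mem⟩ := Submodule.mem_span_finite_of_mem_span hw
      have hufin : (x ⁻¹' ↑u).Finite :=
        Set.Finite.preimage (Set.injOn_of_injective hindep.injective) u.finite_toSet
      refine ⟨hufin.toFinset.filter (· ∈ Λ), ?_, ?_⟩
      · intro k hk
        exact (Finset.mem_filter.1 hk).2
      · refine Submodule.span_mono ?_ hw_mem
        intro z hz
        obtain ⟨k, hkΛ, rfl⟩ := hu_sub hz
        exact ⟨k, by simp [Set.Finite.mem_toFinset]; exact ⟨hz, hkΛ⟩, rfl⟩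
    choose Fw hFw1 hFw2 using hsupp
    set F' : Finset (Fin r → ℤ) := insert 0 (t.biUnion Fw) with hF'
    have hF'Λ : ↑F' ⊆ (Λ : Set (Fin r → ℤ)) := by
      intro k hk
      rcases Finset.mem_insert.1 hk with h | h
      · subst h; exact Λ.zero_mem
      · obtain ⟨w, hw, hkw⟩ := Finset.mem_biUnion.1 h
        exact hFw1 w hkw
    have hF'0 : (0 : Fin r → ℤ) ∈ F' := Finset.mem_insert_self _ _
    have hWle : V.map Sval ≤ Submodule.span K (x '' ↑F') := by
      rw [← ht, Submodule.map_span, Submodule.span_le]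
      rintro _ ⟨w, hw, rfl⟩
      refine Submodule.span_mono ?_ (hFw2 w)
      exact Set.image_mono fun k hk =>
        Finset.mem_insert_of_mem (Finset.mem_biUnion.2 ⟨w, hw, hk⟩)
    obtain ⟨M, hM1, hMcard⟩ := card_nsmul_le N F' (fun f hf => hmemN f (hF'Λ hf))
    have hpow : ∀ j : ℕ, (V.map Sval) ^ j ≤ (Submodule.span K (x '' (F' : Set (Fin r → ℤ)))) ^ j := by
      intro j
      induction j with
      | zero => simp
      | succ j ih => rw [pow_succ, pow_succ]; exact mul_le_mul' ih hWle
    have key : ∀ n : ℕ, Module.finrank K ↥(⨆ i ∈ Finset.range (n + 1), V ^ i) ≤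
        (2 * M * n + 1) ^ d := by
      intro n
      rw [hrank_map V n]
      have hle : (⨆ i ∈ Finset.range (n+1), (V.map Sval) ^ i) ≤
          Submodule.span K (x '' ↑(n • F')) := by
        refine iSup₂_le fun i hi => ?_
        have hi' : i ≤ n := Nat.lt_succ_iff.1 (Finset.mem_range.1 hi)
        calc (V.map Sval) ^ i ≤ (Submodule.span K (x '' (F' : Set (Fin r → ℤ)))) ^ i := hpow i
          _ = Submodule.span K (x '' ↑(i • F')) := by
              rw [span_image_pow hx0 hx, Finset.coe_nsmul]
          _ ≤ Submodule.span K (x '' ↑(n • F')) :=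
              Submodule.span_mono (Set.image_mono (nsmul_subset_nsmul hF'0 hi'))
      haveI : FiniteDimensional K ↥(Submodule.span K (x '' ↑(n • F'))) :=
        FiniteDimensional.span_of_finite K ((n • F').finite_toSet.image x)
      calc Module.finrank K ↥(⨆ i ∈ Finset.range (n+1), (V.map Sval) ^ i)
          ≤ Module.finrank K ↥(Submodule.span K (x '' ↑(n • F'))) :=
            Submodule.finrank_mono hle
        _ = (n • F').card := finrank_span_image hindep _
        _ ≤ (2 * M * n + 1) ^ d := hMcard n
    exact limsup_le_of_growth _ d M hM1 key
  -- the distinguished generating subspace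
  obtain ⟨gen, hgen⟩ := hΛ
  set F₀ : Finset (Fin r → ℤ) := insert 0 gen with hF₀
  have hF₀Λ : ↑F₀ ⊆ (Λ : Set (Fin r → ℤ)) := by
    intro k hk
    rcases Finset.mem_insert.1 hk with h | h
    · subst h; exact Λ.zero_mem
    · rw [← hgen]; exact AddSubmonoid.subset_closure h
  have hF₀0 : (0 : Fin r → ℤ) ∈ F₀ := Finset.mem_insert_self _ _
  set y : (Fin r → ℤ) → ↥S := fun k => if h : x k ∈ S then ⟨x k, h⟩ else 0 with hy
  set V₀ : Submodule K ↥S := Submodule.span K (y '' ↑F₀) with hV₀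
  have hV₀fg : V₀.FG := Submodule.fg_span (F₀.finite_toSet.image y)
  have hmapV₀ : V₀.map Sval = Submodule.span K (x '' ↑F₀) := by
    rw [hV₀, Submodule.map_span, ← Set.image_comp]
    congr 1
    apply Set.image_congr
    intro f hf
    simp only [Function.comp_apply, hy]
    rw [dif_pos (hmem f (hF₀Λ hf))]
    rfl
  -- V₀ generates S as an algebra
  have hadj : Algebra.adjoin K (V₀ : Set ↥S) = ⊤ := by
    apply Subalgebra.map_injective (f := S.val) hinj
    rw [AlgHom.map_adjoin, Algebra.map_top, Subalgebra.range_val]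
    have himg : (S.val '' (V₀ : Set ↥S)) = ↑(Submodule.span K (x '' ↑F₀)) := by
      rw [← hmapV₀]
      rfl
    rw [himg]
    apply le_antisymm
    · apply Algebra.adjoin_le
      intro z hz
      have h1 : z ∈ Submodule.span K (x '' (Λ : Set (Fin r → ℤ))) :=
        Submodule.span_mono (Set.image_mono hF₀Λ) hz
      rw [← hS] at h1
      exact h1
    · intro z hz
      have h1 : z ∈ Submodule.span K (x '' (Λ : Set (Fin r → ℤ))) := by rw [← hS]; exact hz
      have hxk : ∀ k, k ∈ Λ → x k ∈ Algebra.adjoin K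
          ((Submodule.span K (x '' ↑F₀) : Submodule K T) : Set T) := by
        intro k hk
        rw [← hgen] at hk
        induction hk using AddSubmonoid.closure_induction with
        | mem f hf =>
          exact Algebra.subset_adjoin
            (Submodule.subset_span ⟨f, Finset.mem_insert_of_mem hf, rfl⟩)
        | zero => rw [hx0]; exact one_mem _
        | add a b ha hb iha ihb =>
          obtain ⟨c, hc⟩ := hxadd a b
          rw [hc]
          exact Subalgebra.smul_mem _ (mul_mem iha ihb) _
      have hsp : Submodule.span K (x '' (Λ : Set (Fin r → ℤ))) ≤
          Subalgebra.toSubmodule (Algebra.adjoin K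
            ((Submodule.span K (x '' ↑F₀) : Submodule K T) : Set T)) := by
        rw [Submodule.span_le]
        rintro _ ⟨k, hk, rfl⟩
        exact hxk k hk
      exact hsp h1
  -- finrank of the filtration of V₀
  have hv₀ : ∀ n : ℕ, Module.finrank K ↥(⨆ i ∈ Finset.range (n + 1), V₀ ^ i) =
      (n • F₀).card := by
    intro n
    rw [hrank_map V₀ n, hmapV₀]
    have heq : (⨆ i ∈ Finset.range (n+1), (Submodule.span K (x '' (F₀ : Set (Fin r → ℤ)))) ^ i) =
        Submodule.span K (x '' ↑(n • F₀)) := by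
      apply le_antisymm
      · refine iSup₂_le fun i hi => ?_
        have hi' : i ≤ n := Nat.lt_succ_iff.1 (Finset.mem_range.1 hi)
        calc (Submodule.span K (x '' (F₀ : Set (Fin r → ℤ)))) ^ i
            = Submodule.span K (x '' ↑(i • F₀)) := by
              rw [span_image_pow hx0 hx, Finset.coe_nsmul]
          _ ≤ Submodule.span K (x '' ↑(n • F₀)) :=
              Submodule.span_mono (Set.image_mono (nsmul_subset_nsmul hF₀0 hi'))
      · have h1 : Submodule.span K (x '' ↑(n • F₀)) =
            (Submodule.span K (x '' (F₀ : Set (Fin r → ℤ)))) ^ n := by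
          rw [span_image_pow hx0 hx, Finset.coe_nsmul]
        rw [h1]
        exact le_iSup₂ (f := fun i _ => (Submodule.span K (x '' (F₀ : Set (Fin r → ℤ)))) ^ i)
          n (Finset.self_mem_range_succ n)
    rw [heq]
    exact finrank_span_image hindep _
  -- upper bound for the counting function of F₀
  obtain ⟨M₀, hM₀1, hM₀card⟩ := card_nsmul_le N F₀ (fun f hf => hmemN f (hF₀Λ hf))
  -- lower bound: lattice points
  obtain ⟨lam, hlamΛ, hlaminj⟩ := exists_lattice_family Λ
  have hlamF : ∀ j, ∃ L : ℕ, lam j ∈ L • F₀ := by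
    intro j
    apply exists_mem_nsmul_of_mem_closure (F := F₀)
    have h1 : lam j ∈ AddSubmonoid.closure (↑gen : Set (Fin r → ℤ)) := by
      rw [hgen]; exact hlamΛ j
    exact AddSubmonoid.closure_mono (by exact_mod_cast Finset.subset_insert 0 gen) h1
  choose L hL using hlamF
  set L₀ : ℕ := Finset.univ.sup L with hL₀
  have hlamL : ∀ j, lam j ∈ L₀ • F₀ :=
    fun j => nsmul_subset_nsmul hF₀0 (Finset.le_sup (Finset.mem_univ j)) (hL j)
  set C : ℕ := d * L₀ + 1 with hC
  have hC1 : 1 ≤ C := Nat.le_add_left 1 _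
  have hlb : ∀ m : ℕ, ((m : ℝ) / (C : ℝ)) ^ d ≤ ((m • F₀).card : ℝ) := by
    intro m
    set n := m / C with hn
    have hinj' : Set.InjOn (fun a : Fin d → ℕ => ∑ j, a j • lam j)
        ↑(Fintype.piFinset fun _ : Fin d => Finset.range (n + 1)) :=
      fun a _ a' _ h => hlaminj a a' h
    have hsub : ∀ a ∈ Fintype.piFinset (fun _ : Fin d => Finset.range (n + 1)),
        (∑ j, a j • lam j) ∈ m • F₀ := by
      intro a ha
      have h1 : (∑ j, a j • lam j) ∈ (∑ j, a j * L₀) • F₀ :=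
        sum_mem_nsmul _ _ _ _ (fun j _ => nsmul_mem_nsmul (hlamL j) (a j))
      refine nsmul_subset_nsmul hF₀0 ?_ h1
      have h2 : ∀ j, a j ≤ n := fun j =>
        Nat.lt_succ_iff.1 (Finset.mem_range.1 (Fintype.mem_piFinset.1 ha j))
      calc ∑ j, a j * L₀ ≤ ∑ _j : Fin d, n * L₀ :=
            Finset.sum_le_sum fun j _ => Nat.mul_le_mul_right _ (h2 j)
        _ = d * L₀ * n := by
            rw [Finset.sum_const, Finset.card_univ, Fintype.card_fin, smul_eq_mul]; ring
        _ ≤ C * n := Nat.mul_le_mul_right _ (Nat.le_succ _)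
        _ ≤ m := by rw [hn, mul_comm]; exact Nat.div_mul_le_self m C
    have hcard1 : ((Fintype.piFinset fun _ : Fin d => Finset.range (n + 1)).image
        (fun a : Fin d → ℕ => ∑ j, a j • lam j)).card = (n + 1) ^ d := by
      rw [Finset.card_image_of_injOn hinj', Fintype.card_piFinset]
      simp [Finset.card_range]
    have hcard2 : (n + 1) ^ d ≤ (m • F₀).card := by
      rw [← hcard1]
      exact Finset.card_le_card (Finset.image_subset_iff.2 hsub)
    have hC0 : (0 : ℝ) < (C : ℝ) := by exact_mod_cast Nat.lt_of_lt_of_le Nat.zero_lt_one hC1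
    have hmC : (m : ℝ) / (C : ℝ) ≤ ((n + 1 : ℕ) : ℝ) := by
      rw [div_le_iff₀ hC0]
      have h3 : m < C * (n + 1) := Nat.lt_mul_div_succ m (Nat.lt_of_lt_of_le Nat.zero_lt_one hC1)
      calc (m : ℝ) ≤ ((C * (n + 1) : ℕ) : ℝ) := by exact_mod_cast h3.le
        _ = ((n + 1 : ℕ) : ℝ) * (C : ℝ) := by push_cast; ring
    calc ((m : ℝ) / (C : ℝ)) ^ d ≤ (((n + 1 : ℕ)) : ℝ) ^ d :=
          pow_le_pow_left₀ (by positivity) hmC d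
      _ = (((n + 1) ^ d : ℕ) : ℝ) := by push_cast; ring
      _ ≤ _ := by exact_mod_cast hcard2
  -- the limsup for V₀ is exactly d
  have hlim : limsup (fun n : ℕ =>
      Real.log (Module.finrank K ↥(⨆ i ∈ Finset.range (n + 1), V₀ ^ i)) / Real.log n)
      atTop = (d : ℝ) := by
    have hfun : (fun n : ℕ =>
        Real.log (Module.finrank K ↥(⨆ i ∈ Finset.range (n + 1), V₀ ^ i)) / Real.log n) =
        fun n : ℕ => Real.log ((n • F₀).card) / Real.log n := by
      funext n
      rw [hv₀ n]
    rw [hfun]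
    exact limsup_eq_of_growth _ d M₀ C hM₀1 hC1 hM₀card hlb
  -- conclude
  unfold GKdim
  apply IsGreatest.csSup_eq
  constructor
  · exact ⟨V₀, hV₀fg, hadj, hlim.symm⟩
  · rintro d' ⟨V, hVfg, -, rfl⟩
    exact hUB V hVfg
end
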